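/- arXiv:2112.00090 — 5 statements merged into one kernel-verified Lean document; each statement's English description precedes it below -/
import Mathlib

section
/- Let d ≥ 1, n = d(d+1), and let b_1, …, b_n be unit vectors in ℂ^d such that for every j ≠ k, |⟨b_j, b_k⟩|² equals either 0 or 1/d. Then the number of unordered pairs {j,k}, j ≠ k, with ⟨b_j, b_k⟩ = 0 is at most (d+1)·d(d-1)/2. -/
open Finset Matrix

/-- Let `d ≥ 1`, `n = d(d+1)`, and let `b 1, …, b n` be unit vectors in `ℂ^d`
such that for every `j ≠ k`, `|⟨b j, b k⟩|²` equals either `0` or `1/d`.  Then the number of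
unordered pairs `{j,k}`, `j ≠ k`, with `⟨b j, b k⟩ = 0` is at most `(d+1)·d·(d-1)/2`. -/
theorem card_orthogonal_pairs_le
    (d n : ℕ) (hd : 1 ≤ d) (hn : n = d * (d + 1))
    (b : Fin n → EuclideanSpace ℂ (Fin d))
    (hnorm : ∀ j, ‖b j‖ = 1)
    (hangles : ∀ j k, j ≠ k →
      ‖(inner ℂ (b j) (b k) : ℂ)‖ ^ 2 = 0 ∨ ‖(inner ℂ (b j) (b k) : ℂ)‖ ^ 2 = 1 / d) :
    {s : Sym2 (Fin n) | ∃ j k, j ≠ k ∧ s = s(j, k) ∧ (inner ℂ (b j) (b k) : ℂ) = 0}.ncard ≤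
      (d + 1) * d * (d - 1) / 2 := by
  classical
  have hinner : ∀ j k, (inner ℂ (b j) (b k) : ℂ) = ∑ a, (starRingEnd ℂ) (b j a) * b k a := by
    intro j k; simp [PiLp.inner_apply, RCLike.inner_apply, mul_comm]
  set A : Matrix (Fin d) (Fin n) ℂ := Matrix.of (fun a j => b j a) with hA
  set G : Matrix (Fin n) (Fin n) ℂ := Aᴴ * A with hG
  set N : Matrix (Fin d) (Fin d) ℂ := A * Aᴴ with hN
  have hGjk : ∀ j k, G j k = (inner ℂ (b j) (b k) : ℂ) := by
    intro j k
    rw [hinner]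
    simp [hG, hA, Matrix.mul_apply, Matrix.conjTranspose_apply]
  have hGsymm : ∀ j k, G k j = (starRingEnd ℂ) (G j k) := by
    intro j k
    rw [hGjk, hGjk, ← inner_conj_symm]
  have hNsymm : ∀ a c, N c a = (starRingEnd ℂ) (N a c) := by
    intro a c
    have : Nᴴ = N := by
      rw [hN, Matrix.conjTranspose_mul, Matrix.conjTranspose_conjTranspose]
    conv_lhs => rw [← this]
    simp [Matrix.conjTranspose_apply]
  -- the key trace identity
  have htrace : Matrix.trace (G * G) = Matrix.trace (N * N) := by
    rw [hG, hN]
    calc Matrix.trace (Aᴴ * A * (Aᴴ * A)) = Matrix.trace (Aᴴ * (A * (Aᴴ * A))) := by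
          simp only [Matrix.mul_assoc]
      _ = Matrix.trace ((A * (Aᴴ * A)) * Aᴴ) := (Matrix.trace_mul_comm _ _)
      _ = Matrix.trace (A * Aᴴ * (A * Aᴴ)) := by simp only [Matrix.mul_assoc]
  have htrG : Matrix.trace (G * G) = ∑ j, ∑ k, (‖(inner ℂ (b j) (b k) : ℂ)‖^2 : ℂ) := by
    rw [Matrix.trace]
    refine Finset.sum_congr rfl fun j _ => ?_
    rw [Matrix.diag, Matrix.mul_apply]
    refine Finset.sum_congr rfl fun k _ => ?_
    rw [hGsymm j k, RCLike.mul_conj, hGjk]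
    norm_cast
  have htrN : Matrix.trace (N * N) = ∑ a, ∑ c, (‖N a c‖^2 : ℂ) := by
    rw [Matrix.trace]
    refine Finset.sum_congr rfl fun a _ => ?_
    rw [Matrix.diag, Matrix.mul_apply]
    refine Finset.sum_congr rfl fun c _ => ?_
    rw [hNsymm a c, RCLike.mul_conj]
    norm_cast
  -- real version of trace identity
  have hTeq : ∑ j, ∑ k, ‖(inner ℂ (b j) (b k) : ℂ)‖^2 = ∑ a, ∑ c, ‖N a c‖^2 := by
    have := htrace
    rw [htrG, htrN] at this
    exact_mod_cast this
  -- diagonal of N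
  set r : Fin d → ℝ := fun a => ∑ j, ‖b j a‖^2 with hr
  have hNaa : ∀ a, N a a = (r a : ℂ) := by
    intro a
    rw [hN, Matrix.mul_apply, hr]
    push_cast
    refine Finset.sum_congr rfl fun j _ => ?_
    simp only [hA, Matrix.of_apply, Matrix.conjTranspose_apply]
    simpa using RCLike.mul_conj (b j a)
  have hrnonneg : ∀ a, 0 ≤ r a := fun a => Finset.sum_nonneg fun j _ => sq_nonneg _
  have hrsum : ∑ a, r a = n := by
    have h1 : ∀ j : Fin n, ∑ a, ‖b j a‖^2 = (1:ℝ) := by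
      intro j
      have : ‖b j‖^2 = ∑ a, ‖b j a‖^2 := by
        rw [EuclideanSpace.norm_eq, Real.sq_sqrt]; positivity
      rw [← this, hnorm, one_pow]
    simp only [hr]
    rw [Finset.sum_comm, Finset.sum_congr rfl (fun j _ => h1 j), Finset.sum_const,
      Finset.card_univ, Fintype.card_fin, nsmul_eq_mul, mul_one]
  -- Cauchy-Schwarz / frame bound
  have hkey : (n:ℝ)^2 ≤ d * ∑ j, ∑ k, ‖(inner ℂ (b j) (b k) : ℂ)‖^2 := by
    have h1 : ((n:ℝ))^2 ≤ d * ∑ a, (r a)^2 := by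
      have := sq_sum_le_card_mul_sum_sq (s := (Finset.univ : Finset (Fin d))) (f := r)
      rw [hrsum] at this
      simpa using this
    have h2 : ∑ a, (r a)^2 ≤ ∑ a, ∑ c, ‖N a c‖^2 := by
      refine Finset.sum_le_sum fun a _ => ?_
      have : (r a)^2 = ‖N a a‖^2 := by
        rw [hNaa, Complex.norm_real, Real.norm_eq_abs, abs_of_nonneg (hrnonneg a)]
      rw [this]
      exact Finset.single_le_sum (f := fun c => ‖N a c‖^2) (fun c _ => sq_nonneg _)
        (Finset.mem_univ a)
    rw [hTeq]
    nlinarith [h2]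
  -- split T into diagonal and off-diagonal
  set P : Finset (Fin n × Fin n) :=
    (Finset.univ.offDiag).filter (fun p => (inner ℂ (b p.1) (b p.2) : ℂ) = 0) with hP
  set Q : Finset (Fin n × Fin n) :=
    (Finset.univ.offDiag).filter (fun p => ¬ (inner ℂ (b p.1) (b p.2) : ℂ) = 0) with hQ
  have hTsplit : ∑ j, ∑ k, ‖(inner ℂ (b j) (b k) : ℂ)‖^2 = n + (Q.card : ℝ) / d := by
    have h0 : ∑ j, ∑ k, ‖(inner ℂ (b j) (b k) : ℂ)‖^2
        = ∑ p ∈ (Finset.univ ×ˢ Finset.univ : Finset (Fin n × Fin n)),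
        ‖(inner ℂ (b p.1) (b p.2) : ℂ)‖^2 := by
      rw [← Finset.sum_product']
    rw [h0, ← Finset.diag_union_offDiag,
      Finset.sum_union (Finset.disjoint_diag_offDiag _), Finset.sum_diag]
    have hdiag : ∑ j : Fin n, ‖(inner ℂ (b j) (b j) : ℂ)‖^2 = n := by
      have h1 : ∀ j : Fin n, ‖(inner ℂ (b j) (b j) : ℂ)‖^2 = (1:ℝ) := by
        intro j
        rw [inner_self_eq_norm_sq_to_K, hnorm]
        norm_num
      rw [Finset.sum_congr rfl (fun j _ => h1 j), Finset.sum_const, Finset.card_univ,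
        Fintype.card_fin, nsmul_eq_mul, mul_one]
    have hoff : ∑ p ∈ Finset.univ.offDiag,
        ‖(inner ℂ (b p.1) (b p.2) : ℂ)‖^2 = (Q.card : ℝ) / d := by
      rw [← Finset.sum_filter_add_sum_filter_not _ (fun p => (inner ℂ (b p.1) (b p.2) : ℂ) = 0),
        ← hP, ← hQ]
      have hPz : ∑ p ∈ P, ‖(inner ℂ (b p.1) (b p.2) : ℂ)‖^2 = 0 := by
        refine Finset.sum_eq_zero fun p hp => ?_
        rw [hP, Finset.mem_filter] at hp
        rw [hp.2]
        simp
      have hQz : ∑ p ∈ Q, ‖(inner ℂ (b p.1) (b p.2) : ℂ)‖^2 = (Q.card : ℝ) / d := by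
        have hconst : ∀ p ∈ Q, ‖(inner ℂ (b p.1) (b p.2) : ℂ)‖^2 = 1/(d:ℝ) := by
          intro p hp
          rw [hQ, Finset.mem_filter, Finset.mem_offDiag] at hp
          rcases hangles p.1 p.2 hp.1.2.2 with h | h
          · exact absurd (norm_eq_zero.mp ((pow_eq_zero_iff two_ne_zero).mp h)) hp.2
          · exact h
        rw [Finset.sum_congr rfl hconst, Finset.sum_const, nsmul_eq_mul]
        ring
      rw [hPz, hQz, zero_add]
    rw [hdiag, hoff]
  -- count Q from below
  have hdpos : (0:ℝ) < d := by exact_mod_cast hd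
  have hQcard : (n * d * d : ℕ) ≤ Q.card := by
    have : (n:ℝ) * d * d ≤ (Q.card : ℝ) := by
      rw [hTsplit] at hkey
      have hn' : (n:ℝ) = d * (d+1) := by exact_mod_cast hn
      have hexp : (d:ℝ) * ((n:ℝ) + (Q.card:ℝ)/d) = d * n + Q.card := by
        rw [mul_add, mul_div_assoc', mul_div_cancel_left₀ _ hdpos.ne']
      rw [hexp] at hkey
      nlinarith [hkey]
    exact_mod_cast this
  have hPQ : P.card + Q.card = n * n - n := by
    rw [hP, hQ, Finset.card_filter_add_card_filter_not, Finset.offDiag_card,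
      Finset.card_univ, Fintype.card_fin]
  have hnpos : 0 < n := by rw [hn]; exact Nat.mul_pos hd (by omega)
  have hnn : n ≤ n * n := Nat.le_mul_of_pos_left n hnpos
  have hPcard : P.card ≤ n * (d - 1) := by
    zify [hnn, hd] at hPQ ⊢
    have hn' : (n:ℤ) = d * (d+1) := by exact_mod_cast hn
    have hQ' : (n:ℤ) * d * d ≤ (Q.card:ℤ) := by exact_mod_cast hQcard
    nlinarith [hPQ, hQ', hn']
  -- relate the Sym2 set to P
  set Sset := {s : Sym2 (Fin n) | ∃ j k, j ≠ k ∧ s = s(j, k) ∧ (inner ℂ (b j) (b k) : ℂ) = 0}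
    with hSset
  have hfin : Sset.Finite := Set.toFinite _
  rw [Set.ncard_eq_toFinset_card Sset hfin]
  set F : Finset (Sym2 (Fin n)) := hfin.toFinset with hF
  have hmemF : ∀ s, s ∈ F ↔ s ∈ Sset := fun s => Set.Finite.mem_toFinset hfin
  -- each element of F gives two elements of P
  have hout : ∀ s ∈ F, (Quot.out s).1 ≠ (Quot.out s).2 ∧
      (inner ℂ (b (Quot.out s).1) (b (Quot.out s).2) : ℂ) = 0 := by
    intro s hs
    rw [hmemF, hSset] at hs
    obtain ⟨j, k, hjk, hseq, hz⟩ := hs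
    rcases hc : Quot.out s with ⟨o1, o2⟩
    have ho : s(o1, o2) = s(j, k) := by
      have := (Quot.out_eq s).trans hseq; rw [hc] at this; exact this
    rcases Sym2.eq_iff.mp ho with ⟨h1, h2⟩ | ⟨h1, h2⟩ <;> subst h1 <;> subst h2
    · exact ⟨hjk, hz⟩
    · exact ⟨hjk.symm, inner_eq_zero_symm.mp hz⟩
  have hinj : 2 * F.card ≤ P.card := by
    have hmaps : ∀ x ∈ F ×ˢ (Finset.univ : Finset Bool),
        (cond x.2 (Quot.out x.1) ((Quot.out x.1).swap)) ∈ P := by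
      intro x hx
      rw [Finset.mem_product] at hx
      obtain ⟨h1, h2⟩ := hout x.1 hx.1
      obtain ⟨x1, t⟩ := x
      simp only at h1 h2 ⊢
      rw [hP, Finset.mem_filter, Finset.mem_offDiag]
      cases t
      · simp only [cond_false, Prod.fst_swap, Prod.snd_swap]
        exact ⟨⟨Finset.mem_univ _, Finset.mem_univ _, Ne.symm h1⟩,
          inner_eq_zero_symm.mp h2⟩
      · simp only [cond_true]
        exact ⟨⟨Finset.mem_univ _, Finset.mem_univ _, h1⟩, h2⟩
    have hmk : ∀ x : Sym2 (Fin n) × Bool,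
        Quot.mk (Sym2.Rel (Fin n)) (cond x.2 (Quot.out x.1) ((Quot.out x.1).swap)) = x.1 := by
      intro x
      obtain ⟨x1, t⟩ := x
      cases t
      · simp only [cond_false]
        refine (Quot.sound (Sym2.Rel.swap _ _)).symm.trans ?_
        exact Quot.out_eq x1
      · simp only [cond_true]
        exact Quot.out_eq x1
    have hinjOn : Set.InjOn (fun x : Sym2 (Fin n) × Bool =>
        cond x.2 (Quot.out x.1) ((Quot.out x.1).swap))
        (↑(F ×ˢ (Finset.univ : Finset Bool)) : Set (Sym2 (Fin n) × Bool)) := by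
      intro x hx y hy hxy
      simp only at hxy
      simp only [Finset.mem_coe, Finset.mem_product] at hx hy
      have h1 : x.1 = y.1 := by rw [← hmk x, ← hmk y, hxy]
      have hne := (hout x.1 hx.1).1
      obtain ⟨x1, t⟩ := x
      obtain ⟨y1, u⟩ := y
      simp only at h1 hxy hne
      subst h1
      have h2 : t = u := by
        cases t <;> cases u
        · rfl
        · exfalso
          apply hne
          simp only [cond_false, cond_true] at hxy
          have h3 := congrArg Prod.fst hxy
          simp only [Prod.fst_swap] at h3
          exact h3.symm
        · exfalso
          apply hne
          simp only [cond_false, cond_true] at hxy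
          have h3 := congrArg Prod.fst hxy
          simp only [Prod.fst_swap] at h3
          exact h3
        · rfl
      rw [h2]
    have hcard := Finset.card_le_card_of_injOn _ hmaps hinjOn
    rw [Finset.card_product, Finset.card_univ] at hcard
    have hb2 : Fintype.card Bool = 2 := by simp
    rw [hb2, mul_comm] at hcard
    exact hcard
  -- final arithmetic
  have : 2 * F.card ≤ (d + 1) * d * (d - 1) := by
    calc 2 * F.card ≤ P.card := hinj
      _ ≤ n * (d - 1) := hPcard
      _ = (d + 1) * d * (d - 1) := by rw [hn, Nat.mul_comm d (d+1)]
  rw [Nat.le_div_iff_mul_le (by norm_num : 0 < 2)]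
  calc F.card * 2 = 2 * F.card := Nat.mul_comm _ _
    _ ≤ (d + 1) * d * (d - 1) := this
end

section
/- Let d ≥ 1, n = d(d+1), and let b_1, …, b_n be unit vectors in ℂ^d such that for every j ≠ k, |⟨b_j, b_k⟩|² equals either 0 or 1/d. Then the number of unordered pairs {j,k}, j ≠ k, with ⟨b_j, b_k⟩ = 0 is exactly (d+1)·d(d-1)/2. -/
open Matrix Kronecker

namespace CardOrthAux

variable {d : ℕ}


noncomputable def Pm (v : EuclideanSpace ℂ (Fin d)) : Matrix (Fin d) (Fin d) ℂ :=
  Matrix.of fun a c => v a * (starRingEnd ℂ) (v c)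

lemma trace_Pm (v : EuclideanSpace ℂ (Fin d)) (hv : ‖v‖ = 1) : (Pm v).trace = 1 := by
  have h : (inner ℂ v v : ℂ) = 1 := by
    rw [inner_self_eq_norm_sq_to_K, hv]; norm_num
  rw [← h, PiLp.inner_apply]
  simp only [Matrix.trace, Matrix.diag, Pm, Matrix.of_apply, RCLike.inner_apply]

lemma trace_Pm_mul (v w : EuclideanSpace ℂ (Fin d)) :
    (Pm v * Pm w).trace = (inner ℂ v w : ℂ) * (inner ℂ w v : ℂ) := by
  simp only [Matrix.trace, Matrix.diag, Matrix.mul_apply, Pm, Matrix.of_apply,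
    PiLp.inner_apply, RCLike.inner_apply, Finset.sum_mul_sum]
  rw [Finset.sum_comm]
  exact Finset.sum_congr rfl fun c _ => Finset.sum_congr rfl fun a _ => by ring

lemma Pm_conjT (v : EuclideanSpace ℂ (Fin d)) : (Pm v)ᴴ = Pm v := by
  ext a c
  simp [Pm, Matrix.conjTranspose_apply, mul_comm]


def Wm (d : ℕ) : Matrix (Fin d × Fin d) (Fin d × Fin d) ℂ :=
  Matrix.of fun p q => if p.1 = q.2 ∧ p.2 = q.1 then 1 else 0

lemma mul_Wm_apply (X : Matrix (Fin d × Fin d) (Fin d × Fin d) ℂ) (p q : Fin d × Fin d) :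
    (X * Wm d) p q = X p (q.2, q.1) := by
  rw [Matrix.mul_apply, Finset.sum_eq_single (q.2, q.1)]
  · simp [Wm]
  · intro r _ hr
    have : ¬(r.1 = q.2 ∧ r.2 = q.1) := by
      rintro ⟨h1, h2⟩; exact hr (Prod.ext h1 h2)
    simp [Wm, this]
  · simp

lemma Wm_mul_apply (X : Matrix (Fin d × Fin d) (Fin d × Fin d) ℂ) (p q : Fin d × Fin d) :
    (Wm d * X) p q = X (p.2, p.1) q := by
  rw [Matrix.mul_apply, Finset.sum_eq_single (p.2, p.1)]
  · simp [Wm]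
  · intro r _ hr
    have : ¬(p.1 = r.2 ∧ p.2 = r.1) := by
      rintro ⟨h1, h2⟩; exact hr (Prod.ext h2.symm h1.symm)
    simp [Wm, this]
  · simp

lemma Wm_conjT : (Wm d)ᴴ = Wm d := by
  ext p q
  simp only [Wm, Matrix.conjTranspose_apply, Matrix.of_apply]
  by_cases h : p.1 = q.2 ∧ p.2 = q.1
  · have h' : q.1 = p.2 ∧ q.2 = p.1 := ⟨h.2.symm, h.1.symm⟩
    rw [if_pos h, if_pos h', star_one]
  · have h' : ¬(q.1 = p.2 ∧ q.2 = p.1) := by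
      rintro ⟨h1, h2⟩; exact h ⟨h2.symm, h1.symm⟩
    rw [if_neg h, if_neg h', star_zero]

lemma trace_Wm : (Wm d).trace = (d : ℂ) := by
  simp only [Matrix.trace, Matrix.diag, Wm, Matrix.of_apply]
  rw [Fintype.sum_prod_type]
  simp [Finset.sum_ite_eq, eq_comm]

lemma trace_kron_mul_Wm (A B : Matrix (Fin d) (Fin d) ℂ) :
    ((A ⊗ₖ B) * Wm d).trace = (A * B).trace := by
  simp only [Matrix.trace, Matrix.diag]
  have h1 : ∀ p : Fin d × Fin d, ((A ⊗ₖ B) * Wm d) p p = A p.1 p.2 * B p.2 p.1 := by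
    intro p; rw [mul_Wm_apply]; simp [Matrix.kroneckerMap_apply]
  simp only [h1, Matrix.mul_apply]
  rw [Fintype.sum_prod_type]

lemma kron_mul_Wm (A B : Matrix (Fin d) (Fin d) ℂ) :
    (A ⊗ₖ B) * Wm d = Wm d * (B ⊗ₖ A) := by
  ext p q
  rw [mul_Wm_apply, Wm_mul_apply]
  simp [Matrix.kroneckerMap_apply, mul_comm]

noncomputable def Km (v : EuclideanSpace ℂ (Fin d)) : Matrix (Fin d × Fin d) (Fin d × Fin d) ℂ :=
  Pm v ⊗ₖ Pm v

noncomputable def Lm (v : EuclideanSpace ℂ (Fin d)) : Matrix (Fin d × Fin d) (Fin d × Fin d) ℂ :=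
  (Pm v ⊗ₖ (1 : Matrix (Fin d) (Fin d) ℂ)) + ((1 : Matrix (Fin d) (Fin d) ℂ) ⊗ₖ Pm v)

noncomputable def Pi2 (d : ℕ) : Matrix (Fin d × Fin d) (Fin d × Fin d) ℂ :=
  (2⁻¹ : ℂ) • ((1 : Matrix (Fin d × Fin d) (Fin d × Fin d) ℂ) + Wm d)

noncomputable def Qm (v : EuclideanSpace ℂ (Fin d)) : Matrix (Fin d × Fin d) (Fin d × Fin d) ℂ :=
  Pi2 d * Lm v * Pi2 d

lemma Wm_mul_Wm : Wm d * Wm d = 1 := by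
  ext p q
  rw [mul_Wm_apply]
  simp [Wm, Matrix.one_apply, Prod.ext_iff, and_comm]

lemma Pi2_mul_Pi2 : Pi2 d * Pi2 d = Pi2 d := by
  rw [Pi2, smul_mul_assoc, mul_smul_comm, smul_smul]
  have h2 : ((1 : Matrix (Fin d × Fin d) (Fin d × Fin d) ℂ) + Wm d) * (1 + Wm d)
      = (2 : ℂ) • (1 + Wm d) := by
    rw [mul_add, mul_one, add_mul, one_mul, Wm_mul_Wm]; module
  rw [h2, smul_smul]
  norm_num

lemma Km_mul_Wm (v : EuclideanSpace ℂ (Fin d)) : Km v * Wm d = Km v := by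
  ext p q
  rw [mul_Wm_apply]
  simp only [Km, Matrix.kroneckerMap_apply, Pm, Matrix.of_apply]
  ring

lemma Wm_mul_Km (v : EuclideanSpace ℂ (Fin d)) : Wm d * Km v = Km v := by
  ext p q
  rw [Wm_mul_apply]
  simp only [Km, Matrix.kroneckerMap_apply, Pm, Matrix.of_apply]
  ring

lemma Km_mul_Pi2 (v : EuclideanSpace ℂ (Fin d)) : Km v * Pi2 d = Km v := by
  rw [Pi2, mul_smul_comm, mul_add, mul_one, Km_mul_Wm]
  have h : Km v + Km v = (2 : ℂ) • Km v := by module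
  rw [h, smul_smul]
  norm_num

lemma Pi2_mul_Km (v : EuclideanSpace ℂ (Fin d)) : Pi2 d * Km v = Km v := by
  rw [Pi2, smul_mul_assoc, add_mul, one_mul, Wm_mul_Km]
  have h : Km v + Km v = (2 : ℂ) • Km v := by module
  rw [h, smul_smul]
  norm_num

lemma Lm_mul_Wm (v : EuclideanSpace ℂ (Fin d)) : Lm v * Wm d = Wm d * Lm v := by
  rw [Lm, add_mul, kron_mul_Wm, kron_mul_Wm, mul_add, add_comm]

lemma Pi2_mul_Lm (v : EuclideanSpace ℂ (Fin d)) : Pi2 d * Lm v = Lm v * Pi2 d := by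
  rw [Pi2, smul_mul_assoc, mul_smul_comm, add_mul, mul_add, one_mul, mul_one, Lm_mul_Wm]

lemma Qm_eq (v : EuclideanSpace ℂ (Fin d)) : Qm v = Lm v * Pi2 d := by
  rw [Qm, Pi2_mul_Lm, mul_assoc, Pi2_mul_Pi2]

lemma Qm_eq' (v : EuclideanSpace ℂ (Fin d)) : Qm v = Pi2 d * Lm v := by
  rw [Qm_eq, Pi2_mul_Lm]

lemma trace_one_kron : ((1 : Matrix (Fin d) (Fin d) ℂ)).trace = (d : ℂ) := by
  rw [Matrix.trace_one]; simp

lemma trace_Km_mul_Km (v w : EuclideanSpace ℂ (Fin d)) :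
    (Km v * Km w).trace = ((inner ℂ v w : ℂ) * (inner ℂ w v : ℂ)) ^ 2 := by
  rw [Km, Km, ← Matrix.mul_kronecker_mul, Matrix.trace_kronecker, trace_Pm_mul]
  ring

lemma trace_Km_mul_Lm (v w : EuclideanSpace ℂ (Fin d)) (hv : ‖v‖ = 1) :
    (Km v * Lm w).trace = 2 * ((inner ℂ v w : ℂ) * (inner ℂ w v : ℂ)) := by
  rw [Km, Lm, mul_add, ← Matrix.mul_kronecker_mul, ← Matrix.mul_kronecker_mul]
  simp only [mul_one, one_mul, Matrix.trace_add, Matrix.trace_kronecker, trace_Pm_mul,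
    trace_Pm v hv]
  ring

lemma trace_Lm_mul_Km (v w : EuclideanSpace ℂ (Fin d)) (hw : ‖w‖ = 1) :
    (Lm v * Km w).trace = 2 * ((inner ℂ v w : ℂ) * (inner ℂ w v : ℂ)) := by
  rw [Lm, Km, add_mul, ← Matrix.mul_kronecker_mul, ← Matrix.mul_kronecker_mul]
  simp only [mul_one, one_mul, Matrix.trace_add, Matrix.trace_kronecker, trace_Pm_mul,
    trace_Pm w hw]
  ring

lemma trace_Km_mul_Qm (v w : EuclideanSpace ℂ (Fin d)) (hv : ‖v‖ = 1) :
    (Km v * Qm w).trace = 2 * ((inner ℂ v w : ℂ) * (inner ℂ w v : ℂ)) := by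
  rw [Qm_eq', ← mul_assoc, Km_mul_Pi2, trace_Km_mul_Lm v w hv]

lemma trace_Qm_mul_Km (v w : EuclideanSpace ℂ (Fin d)) (hw : ‖w‖ = 1) :
    (Qm v * Km w).trace = 2 * ((inner ℂ v w : ℂ) * (inner ℂ w v : ℂ)) := by
  rw [Matrix.trace_mul_comm, trace_Km_mul_Qm w v hw]
  ring

lemma trace_Lm_mul_Lm (v w : EuclideanSpace ℂ (Fin d)) (hv : ‖v‖ = 1) (hw : ‖w‖ = 1) :
    (Lm v * Lm w).trace = 2 * (d : ℂ) * ((inner ℂ v w : ℂ) * (inner ℂ w v : ℂ)) + 2 := by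
  rw [Lm, Lm, add_mul, mul_add, mul_add, ← Matrix.mul_kronecker_mul, ← Matrix.mul_kronecker_mul,
    ← Matrix.mul_kronecker_mul, ← Matrix.mul_kronecker_mul]
  simp only [mul_one, one_mul, Matrix.trace_add, Matrix.trace_kronecker, trace_Pm_mul,
    trace_Pm v hv, trace_Pm w hw, trace_one_kron]
  ring

lemma trace_Lm_mul_Lm_Wm (v w : EuclideanSpace ℂ (Fin d)) :
    (Lm v * Lm w * Wm d).trace = 4 * ((inner ℂ v w : ℂ) * (inner ℂ w v : ℂ)) := by
  rw [Lm, Lm, add_mul, mul_add, mul_add, ← Matrix.mul_kronecker_mul, ← Matrix.mul_kronecker_mul,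
    ← Matrix.mul_kronecker_mul, ← Matrix.mul_kronecker_mul, add_mul, add_mul, add_mul]
  simp only [mul_one, one_mul, Matrix.trace_add, trace_kron_mul_Wm, trace_Pm_mul]
  ring

lemma trace_Qm_mul_Qm (v w : EuclideanSpace ℂ (Fin d)) (hv : ‖v‖ = 1) (hw : ‖w‖ = 1) :
    (Qm v * Qm w).trace = ((d : ℂ) + 2) * ((inner ℂ v w : ℂ) * (inner ℂ w v : ℂ)) + 1 := by
  have h : Qm v * Qm w = Lm v * Lm w * Pi2 d := by
    rw [Qm_eq, Qm_eq', mul_assoc, ← mul_assoc (Pi2 d), Pi2_mul_Pi2, Pi2_mul_Lm, ← mul_assoc,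
      mul_assoc]
  rw [h, Pi2, mul_smul_comm, Matrix.trace_smul, mul_add, mul_one, Matrix.trace_add,
    trace_Lm_mul_Lm v w hv hw, trace_Lm_mul_Lm_Wm v w]
  field_simp
  ring

lemma trace_Km (v : EuclideanSpace ℂ (Fin d)) (hv : ‖v‖ = 1) : (Km v).trace = 1 := by
  rw [Km, Matrix.trace_kronecker, trace_Pm v hv, mul_one]

lemma trace_Km_mul_Pi2 (v : EuclideanSpace ℂ (Fin d)) (hv : ‖v‖ = 1) :
    (Km v * Pi2 d).trace = 1 := by rw [Km_mul_Pi2, trace_Km v hv]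

lemma trace_Pi2_mul_Km (v : EuclideanSpace ℂ (Fin d)) (hv : ‖v‖ = 1) :
    (Pi2 d * Km v).trace = 1 := by rw [Pi2_mul_Km, trace_Km v hv]

lemma trace_Lm (v : EuclideanSpace ℂ (Fin d)) (hv : ‖v‖ = 1) :
    (Lm v).trace = 2 * (d : ℂ) := by
  rw [Lm, Matrix.trace_add, Matrix.trace_kronecker, Matrix.trace_kronecker, trace_Pm v hv,
    trace_one_kron]
  ring

lemma trace_Lm_mul_Wm (v : EuclideanSpace ℂ (Fin d)) (hv : ‖v‖ = 1) :
    (Lm v * Wm d).trace = 2 := by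
  rw [Lm, add_mul, Matrix.trace_add, trace_kron_mul_Wm, trace_kron_mul_Wm, mul_one, one_mul,
    trace_Pm v hv]
  ring

lemma trace_Qm_mul_Pi2 (v : EuclideanSpace ℂ (Fin d)) (hv : ‖v‖ = 1) :
    (Qm v * Pi2 d).trace = (d : ℂ) + 1 := by
  rw [Qm_eq, mul_assoc, Pi2_mul_Pi2, Pi2, mul_smul_comm, Matrix.trace_smul, mul_add, mul_one,
    Matrix.trace_add, trace_Lm v hv, trace_Lm_mul_Wm v hv]
  field_simp
  ring

lemma trace_Pi2_mul_Qm (v : EuclideanSpace ℂ (Fin d)) (hv : ‖v‖ = 1) :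
    (Pi2 d * Qm v).trace = (d : ℂ) + 1 := by
  rw [Matrix.trace_mul_comm, trace_Qm_mul_Pi2 v hv]

lemma trace_Pi2_mul_Pi2 : (Pi2 d * Pi2 d).trace = ((d : ℂ) * d + d) / 2 := by
  rw [Pi2_mul_Pi2, Pi2, Matrix.trace_smul, Matrix.trace_add, Matrix.trace_one, trace_Wm]
  simp
  ring

noncomputable def A1 (v : EuclideanSpace ℂ (Fin d)) : Matrix (Fin d) (Fin d) ℂ :=
  (d : ℂ) • Pm v - 1

noncomputable def A2 (v : EuclideanSpace ℂ (Fin d)) : Matrix (Fin d × Fin d) (Fin d × Fin d) ℂ :=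
  (((d : ℂ) + 1) * ((d : ℂ) + 2)) • Km v - (2 * ((d : ℂ) + 1)) • Qm v + (2 : ℂ) • Pi2 d

lemma cast_ne₁ (hd : 1 ≤ d) : ((d : ℂ)) ≠ 0 := by
  exact_mod_cast Nat.cast_ne_zero.mpr (by omega)

lemma cast_ne₂ : ((d : ℂ) + 1) ≠ 0 := by
  have : ((d : ℂ) + 1) = ((d + 1 : ℕ) : ℂ) := by push_cast; ring
  rw [this]; exact Nat.cast_ne_zero.mpr (by omega)

lemma cast_ne₃ : ((d : ℂ) + 2) ≠ 0 := by
  have : ((d : ℂ) + 2) = ((d + 2 : ℕ) : ℂ) := by push_cast; ring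
  rw [this]; exact Nat.cast_ne_zero.mpr (by omega)

lemma trace_A1_mul_A1 (v w : EuclideanSpace ℂ (Fin d))
    (hv : ‖v‖ = 1) (hw : ‖w‖ = 1) :
    (A1 v * A1 w).trace
      = (d : ℂ) ^ 2 * ((inner ℂ v w : ℂ) * (inner ℂ w v : ℂ)) - (d : ℂ) := by
  simp only [A1, sub_mul, mul_sub, smul_mul_assoc, mul_smul_comm, smul_smul, mul_one, one_mul,
    Matrix.trace_sub, Matrix.trace_smul, Matrix.trace_one, trace_Pm_mul, trace_Pm v hv,
    trace_Pm w hw, Fintype.card_fin, smul_eq_mul]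
  ring

set_option maxHeartbeats 2000000 in
lemma trace_A2_mul_A2 (v w : EuclideanSpace ℂ (Fin d)) (hv : ‖v‖ = 1) (hw : ‖w‖ = 1) :
    (A2 v * A2 w).trace
      = (((d : ℂ) + 1) * ((d : ℂ) + 2)) ^ 2 * ((inner ℂ v w : ℂ) * (inner ℂ w v : ℂ)) ^ 2
      - 4 * ((d : ℂ) + 1) ^ 2 * ((d : ℂ) + 2) * ((inner ℂ v w : ℂ) * (inner ℂ w v : ℂ))
      + 2 * ((d : ℂ) + 1) * ((d : ℂ) + 2) := by
  simp only [A2, sub_mul, mul_sub, add_mul, mul_add, smul_mul_assoc, mul_smul_comm, smul_smul,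
    Matrix.trace_sub, Matrix.trace_add, Matrix.trace_smul, smul_eq_mul,
    trace_Km_mul_Km, trace_Km_mul_Qm v w hv, trace_Qm_mul_Km v w hw,
    trace_Qm_mul_Qm v w hv hw, trace_Km_mul_Pi2 v hv, trace_Pi2_mul_Km w hw,
    trace_Qm_mul_Pi2 v hv, trace_Pi2_mul_Qm w hw, trace_Pi2_mul_Pi2]
  ring

lemma kron_conjT (A B : Matrix (Fin d) (Fin d) ℂ) : (A ⊗ₖ B)ᴴ = Aᴴ ⊗ₖ Bᴴ := by
  ext p q
  simp [Matrix.conjTranspose_apply, Matrix.kroneckerMap_apply, star_mul', mul_comm]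

lemma A1_conjT (v : EuclideanSpace ℂ (Fin d)) : (A1 v)ᴴ = A1 v := by
  simp [A1, Matrix.conjTranspose_sub, Matrix.conjTranspose_smul, Pm_conjT]

lemma Pi2_conjT : (Pi2 d)ᴴ = Pi2 d := by
  simp [Pi2, Matrix.conjTranspose_smul, Matrix.conjTranspose_add, Wm_conjT, star_inv₀]

lemma Lm_conjT (v : EuclideanSpace ℂ (Fin d)) : (Lm v)ᴴ = Lm v := by
  simp [Lm, Matrix.conjTranspose_add, kron_conjT, Pm_conjT]

lemma Qm_conjT (v : EuclideanSpace ℂ (Fin d)) : (Qm v)ᴴ = Qm v := by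
  rw [Qm, Matrix.conjTranspose_mul, Matrix.conjTranspose_mul, Pi2_conjT, Lm_conjT, mul_assoc]

lemma A2_conjT (v : EuclideanSpace ℂ (Fin d)) : (A2 v)ᴴ = A2 v := by
  have hK : (Km v)ᴴ = Km v := by rw [Km, kron_conjT, Pm_conjT]
  have hs1 : star (((d : ℂ) + 1) * ((d : ℂ) + 2)) = ((d : ℂ) + 1) * ((d : ℂ) + 2) := by simp
  have hs2 : star (2 * ((d : ℂ) + 1)) = 2 * ((d : ℂ) + 1) := by simp
  have hs3 : star (2 : ℂ) = 2 := by simp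
  rw [A2, Matrix.conjTranspose_add, Matrix.conjTranspose_sub, Matrix.conjTranspose_smul,
    Matrix.conjTranspose_smul, Matrix.conjTranspose_smul, hK, Qm_conjT, Pi2_conjT, hs1, hs2, hs3]

lemma trace_self_mul_self {ι : Type*} [Fintype ι] [DecidableEq ι] (M : Matrix ι ι ℂ)
    (h : Mᴴ = M) : ∃ r : ℝ, 0 ≤ r ∧ (M * M).trace = (r : ℂ) := by
  refine ⟨∑ i, ∑ j, ‖M j i‖ ^ 2, by positivity, ?_⟩
  have hMM : M * M = Mᴴ * M := by rw [h]
  rw [hMM]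
  simp only [Matrix.trace, Matrix.diag, Matrix.mul_apply, Matrix.conjTranspose_apply]
  push_cast
  refine Finset.sum_congr rfl fun i _ => Finset.sum_congr rfl fun j _ => ?_
  rw [mul_comm, RCLike.star_def, Complex.mul_conj']

lemma trace_sum_mul_sum {ι : Type*} [Fintype ι] [DecidableEq ι] {n : ℕ}
    (A : Fin n → Matrix ι ι ℂ) :
    ((∑ j, A j) * (∑ k, A k)).trace = ∑ j, ∑ k, (A j * A k).trace := by
  rw [Finset.sum_mul_sum, Matrix.trace_sum]
  exact Finset.sum_congr rfl fun j _ => Matrix.trace_sum _ _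


end CardOrthAux

open CardOrthAux

set_option maxHeartbeats 1600000 in
/-- Let `d ≥ 1`, `n = d(d+1)`, and let `b 1, …, b n` be unit vectors in `ℂ^d`
such that for every `j ≠ k`, `|⟨b j, b k⟩|²` equals either `0` or `1/d`.  Then the number of
unordered pairs `{j,k}`, `j ≠ k`, with `⟨b j, b k⟩ = 0` is exactly `(d+1)·d·(d-1)/2`. -/
theorem card_orthogonal_pairs_eq
    (d n : ℕ) (hd : 1 ≤ d) (hn : n = d * (d + 1))
    (b : Fin n → EuclideanSpace ℂ (Fin d))
    (hnorm : ∀ j, ‖b j‖ = 1)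
    (hangles : ∀ j k, j ≠ k →
      ‖(inner ℂ (b j) (b k) : ℂ)‖ ^ 2 = 0 ∨ ‖(inner ℂ (b j) (b k) : ℂ)‖ ^ 2 = 1 / d) :
    {s : Sym2 (Fin n) | ∃ j k, j ≠ k ∧ s = s(j, k) ∧ (inner ℂ (b j) (b k) : ℂ) = 0}.ncard =
      (d + 1) * d * (d - 1) / 2 := by
  classical
  set Eo : Finset (Fin n × Fin n) :=
    (Finset.univ : Finset (Fin n)).offDiag.filter
      (fun p => (inner ℂ (b p.1) (b p.2) : ℂ) = 0) with hEo
  set Eu : Finset (Fin n × Fin n) :=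
    (Finset.univ : Finset (Fin n)).offDiag.filter
      (fun p => ¬ (inner ℂ (b p.1) (b p.2) : ℂ) = 0) with hEu
  -- the values of τ
  have hdiag : ∀ j : Fin n, (inner ℂ (b j) (b j) : ℂ) * (inner ℂ (b j) (b j) : ℂ) = 1 := by
    intro j
    have : (inner ℂ (b j) (b j) : ℂ) = 1 := by
      rw [inner_self_eq_norm_sq_to_K, hnorm]; norm_num
    rw [this]; norm_num
  have huval : ∀ p : Fin n × Fin n, p ∈ Eu →
      (inner ℂ (b p.1) (b p.2) : ℂ) * (inner ℂ (b p.2) (b p.1) : ℂ) = ((d : ℂ))⁻¹ := by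
    intro p hp
    rw [hEu, Finset.mem_filter, Finset.mem_offDiag] at hp
    obtain ⟨⟨-, -, hne⟩, hz⟩ := hp
    have hns : ‖(inner ℂ (b p.1) (b p.2) : ℂ)‖ ^ 2 = 1 / d := by
      rcases hangles p.1 p.2 hne with h | h
      · exact absurd (by simpa using h) hz
      · exact h
    have hcj : (inner ℂ (b p.2) (b p.1) : ℂ) = (starRingEnd ℂ) (inner ℂ (b p.1) (b p.2) : ℂ) :=
      (inner_conj_symm (b p.2) (b p.1)).symm
    rw [hcj, Complex.mul_conj']
    norm_cast
    rw [hns]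
    push_cast
    rw [one_div]
  -- generic sum splitter
  have key : ∀ (g : Fin n → Fin n → ℂ) (c : ℂ), (∀ j, g j j = 1) →
      (∀ p ∈ Eo, g p.1 p.2 = 0) → (∀ p ∈ Eu, g p.1 p.2 = c) →
      ∑ j, ∑ k, g j k = (n : ℂ) + (Eu.card : ℂ) * c := by
    intro g c h1 h2 h3
    have e0 : ∑ j, ∑ k, g j k = ∑ p ∈ (Finset.univ ×ˢ Finset.univ : Finset (Fin n × Fin n)),
        g p.1 p.2 := by
      rw [Finset.sum_product]
    rw [e0, ← Finset.diag_union_offDiag, Finset.sum_union (Finset.disjoint_diag_offDiag _),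
      Finset.sum_diag]
    have ed : ∑ a : Fin n, g a a = (n : ℂ) := by
      rw [Finset.sum_congr rfl (fun a _ => h1 a), Finset.sum_const, Finset.card_univ]
      simp
    have eo : ∑ p ∈ Finset.univ.offDiag, g p.1 p.2
        = ∑ p ∈ Eo, g p.1 p.2 + ∑ p ∈ Eu, g p.1 p.2 := by
      rw [hEo, hEu, Finset.sum_filter_add_sum_filter_not]
    rw [eo, Finset.sum_eq_zero h2, Finset.sum_congr rfl h3, Finset.sum_const, ed]
    simp [mul_comm]
  -- the two sums
  have S1 : ∑ j, ∑ k, (inner ℂ (b j) (b k) : ℂ) * (inner ℂ (b k) (b j) : ℂ)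
      = (n : ℂ) + (Eu.card : ℂ) * ((d : ℂ))⁻¹ := by
    refine key _ _ (fun j => hdiag j) (fun p hp => ?_) huval
    rw [hEo, Finset.mem_filter] at hp
    rw [hp.2, zero_mul]
  have S2 : ∑ j, ∑ k, ((inner ℂ (b j) (b k) : ℂ) * (inner ℂ (b k) (b j) : ℂ)) ^ 2
      = (n : ℂ) + (Eu.card : ℂ) * (((d : ℂ))⁻¹) ^ 2 := by
    refine key _ _ (fun j => by rw [hdiag j]; norm_num) (fun p hp => ?_)
      (fun p hp => by rw [huval p hp])
    rw [hEo, Finset.mem_filter] at hp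
    rw [hp.2]
    norm_num
  -- positivity 1
  obtain ⟨r1, hr1pos, hr1⟩ := trace_self_mul_self (∑ j, A1 (b j))
    (by rw [Matrix.conjTranspose_sum]; exact Finset.sum_congr rfl fun j _ => A1_conjT (b j))
  have hr1' : (r1 : ℂ) = (d : ℂ) ^ 2 * ((n : ℂ) + (Eu.card : ℂ) * ((d : ℂ))⁻¹)
      - (n : ℂ) * ((n : ℂ) * (d : ℂ)) := by
    rw [← hr1, trace_sum_mul_sum]
    have e : ∀ j k : Fin n, (A1 (b j) * A1 (b k)).trace
        = (d : ℂ) ^ 2 * ((inner ℂ (b j) (b k) : ℂ) * (inner ℂ (b k) (b j) : ℂ)) - (d : ℂ) :=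
      fun j k => trace_A1_mul_A1 (b j) (b k) (hnorm j) (hnorm k)
    simp only [e, Finset.sum_sub_distrib, ← Finset.mul_sum, Finset.sum_const,
      Finset.card_univ, Fintype.card_fin, nsmul_eq_mul]
    rw [S1]
  -- positivity 2
  obtain ⟨r2, hr2pos, hr2⟩ := trace_self_mul_self (∑ j, A2 (b j))
    (by rw [Matrix.conjTranspose_sum]; exact Finset.sum_congr rfl fun j _ => A2_conjT (b j))
  have hr2' : (r2 : ℂ) =
      (((d : ℂ) + 1) * ((d : ℂ) + 2)) ^ 2 * ((n : ℂ) + (Eu.card : ℂ) * (((d : ℂ))⁻¹) ^ 2)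
      - 4 * ((d : ℂ) + 1) ^ 2 * ((d : ℂ) + 2) * ((n : ℂ) + (Eu.card : ℂ) * ((d : ℂ))⁻¹)
      + (n : ℂ) * ((n : ℂ) * (2 * ((d : ℂ) + 1) * ((d : ℂ) + 2))) := by
    rw [← hr2, trace_sum_mul_sum]
    have e : ∀ j k : Fin n, (A2 (b j) * A2 (b k)).trace
        = (((d : ℂ) + 1) * ((d : ℂ) + 2)) ^ 2
            * ((inner ℂ (b j) (b k) : ℂ) * (inner ℂ (b k) (b j) : ℂ)) ^ 2
          - 4 * ((d : ℂ) + 1) ^ 2 * ((d : ℂ) + 2)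
            * ((inner ℂ (b j) (b k) : ℂ) * (inner ℂ (b k) (b j) : ℂ))
          + 2 * ((d : ℂ) + 1) * ((d : ℂ) + 2) :=
      fun j k => trace_A2_mul_A2 (b j) (b k) (hnorm j) (hnorm k)
    simp only [e, Finset.sum_add_distrib, Finset.sum_sub_distrib, ← Finset.mul_sum,
      Finset.sum_const, Finset.card_univ, Fintype.card_fin, nsmul_eq_mul]
    rw [S1, S2]
    ring
  -- realify
  have hdR : (1 : ℝ) ≤ (d : ℝ) := by exact_mod_cast hd
  have hd0 : (d : ℝ) ≠ 0 := by positivity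
  have hI1 : (0 : ℝ) ≤ (d : ℝ) ^ 2 * ((n : ℝ) + (Eu.card : ℝ) * ((d : ℝ))⁻¹)
      - (n : ℝ) * ((n : ℝ) * (d : ℝ)) := by
    have : (r1 : ℂ) = ((((d : ℝ) ^ 2 * ((n : ℝ) + (Eu.card : ℝ) * ((d : ℝ))⁻¹)
        - (n : ℝ) * ((n : ℝ) * (d : ℝ))) : ℝ) : ℂ) := by
      rw [hr1']; push_cast; ring
    have hr1R : r1 = (d : ℝ) ^ 2 * ((n : ℝ) + (Eu.card : ℝ) * ((d : ℝ))⁻¹)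
        - (n : ℝ) * ((n : ℝ) * (d : ℝ)) := by exact_mod_cast this
    rw [hr1R] at hr1pos
    exact hr1pos
  have hI2 : (0 : ℝ) ≤
      (((d : ℝ) + 1) * ((d : ℝ) + 2)) ^ 2 * ((n : ℝ) + (Eu.card : ℝ) * (((d : ℝ))⁻¹) ^ 2)
      - 4 * ((d : ℝ) + 1) ^ 2 * ((d : ℝ) + 2) * ((n : ℝ) + (Eu.card : ℝ) * ((d : ℝ))⁻¹)
      + (n : ℝ) * ((n : ℝ) * (2 * ((d : ℝ) + 1) * ((d : ℝ) + 2))) := by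
    have : (r2 : ℂ) = (((((d : ℝ) + 1) * ((d : ℝ) + 2)) ^ 2 * ((n : ℝ) + (Eu.card : ℝ) * (((d : ℝ))⁻¹) ^ 2)
        - 4 * ((d : ℝ) + 1) ^ 2 * ((d : ℝ) + 2) * ((n : ℝ) + (Eu.card : ℝ) * ((d : ℝ))⁻¹)
        + (n : ℝ) * ((n : ℝ) * (2 * ((d : ℝ) + 1) * ((d : ℝ) + 2))) : ℝ) : ℂ) := by
      rw [hr2']; push_cast; ring
    have hr2R : r2 = (((d : ℝ) + 1) * ((d : ℝ) + 2)) ^ 2 * ((n : ℝ) + (Eu.card : ℝ) * (((d : ℝ))⁻¹) ^ 2)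
        - 4 * ((d : ℝ) + 1) ^ 2 * ((d : ℝ) + 2) * ((n : ℝ) + (Eu.card : ℝ) * ((d : ℝ))⁻¹)
        + (n : ℝ) * ((n : ℝ) * (2 * ((d : ℝ) + 1) * ((d : ℝ) + 2))) := by exact_mod_cast this
    rw [hr2R] at hr2pos
    exact hr2pos
  have hnR : (n : ℝ) = (d : ℝ) * ((d : ℝ) + 1) := by rw [hn]; push_cast; ring
  rw [hnR] at hI1 hI2
  have hxlow : (d : ℝ) ^ 3 * ((d : ℝ) + 1) ≤ (Eu.card : ℝ) := by
    have h1 : (0 : ℝ) ≤ (d : ℝ) * ((d : ℝ) ^ 2 * ((d : ℝ) + 1) + (Eu.card : ℝ)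
        - (d : ℝ) ^ 2 * ((d : ℝ) + 1) ^ 2) := by
      have e : (d : ℝ) ^ 2 * ((d : ℝ) * ((d : ℝ) + 1) + (Eu.card : ℝ) * ((d : ℝ))⁻¹)
          - ((d : ℝ) * ((d : ℝ) + 1)) * (((d : ℝ) * ((d : ℝ) + 1)) * (d : ℝ))
          = (d : ℝ) * ((d : ℝ) ^ 2 * ((d : ℝ) + 1) + (Eu.card : ℝ)
          - (d : ℝ) ^ 2 * ((d : ℝ) + 1) ^ 2) := by
        field_simp
      rw [← e]; exact hI1
    have h1' : (0 : ℝ) ≤ (d : ℝ) ^ 2 * ((d : ℝ) + 1) + (Eu.card : ℝ)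
        - (d : ℝ) ^ 2 * ((d : ℝ) + 1) ^ 2 := by
      nlinarith [h1, hdR]
    nlinarith [h1']
  have hxhigh : (Eu.card : ℝ) ≤ (d : ℝ) ^ 3 * ((d : ℝ) + 1) := by
    have h2 : (0 : ℝ) ≤ ((d : ℝ) + 1) ^ 2 * ((d : ℝ) + 2) * (3 * (d : ℝ) - 2)
        * ((d : ℝ) ^ 3 * ((d : ℝ) + 1) - (Eu.card : ℝ)) := by
      have e : (d : ℝ) ^ 2 *
          ((((d : ℝ) + 1) * ((d : ℝ) + 2)) ^ 2
            * ((d : ℝ) * ((d : ℝ) + 1) + (Eu.card : ℝ) * (((d : ℝ))⁻¹) ^ 2)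
          - 4 * ((d : ℝ) + 1) ^ 2 * ((d : ℝ) + 2)
            * ((d : ℝ) * ((d : ℝ) + 1) + (Eu.card : ℝ) * ((d : ℝ))⁻¹)
          + ((d : ℝ) * ((d : ℝ) + 1))
            * (((d : ℝ) * ((d : ℝ) + 1)) * (2 * ((d : ℝ) + 1) * ((d : ℝ) + 2))))
          = ((d : ℝ) + 1) ^ 2 * ((d : ℝ) + 2) * (3 * (d : ℝ) - 2)
            * ((d : ℝ) ^ 3 * ((d : ℝ) + 1) - (Eu.card : ℝ)) := by
        field_simp
        ring
      rw [← e]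
      positivity
    have hpos : (0 : ℝ) < ((d : ℝ) + 1) ^ 2 * ((d : ℝ) + 2) * (3 * (d : ℝ) - 2) := by
      nlinarith [hdR]
    nlinarith [h2, hpos]
  have hxeq : (Eu.card : ℝ) = (d : ℝ) ^ 3 * ((d : ℝ) + 1) := le_antisymm hxhigh hxlow
  have hEuCard : Eu.card = d ^ 3 * (d + 1) := by
    have h : (Eu.card : ℝ) = ((d ^ 3 * (d + 1) : ℕ) : ℝ) := by
      rw [hxeq]; push_cast; ring
    exact_mod_cast h
  -- count Eo
  have hsplitcard : Eo.card + Eu.card = n * n - n := by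
    rw [hEo, hEu]
    rw [Finset.card_filter_add_card_filter_not, Finset.offDiag_card,
      Finset.card_univ, Fintype.card_fin]
  have hEoCard : Eo.card = d * (d + 1) * (d - 1) := by
    have hnn : n * n = d ^ 3 * (d + 1) + d * (d + 1) * (d - 1) + n := by
      subst hn
      cases' Nat.exists_eq_add_of_le hd with e he
      subst he
      simp only [Nat.add_sub_cancel_left]
      ring
    omega
  -- Sym2 reduction
  set F : Finset (Sym2 (Fin n)) := Eo.image (fun p => s(p.1, p.2)) with hF
  have hset : {s : Sym2 (Fin n) | ∃ j k, j ≠ k ∧ s = s(j, k)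
      ∧ (inner ℂ (b j) (b k) : ℂ) = 0} = ↑F := by
    ext s
    simp only [Set.mem_setOf_eq, hF, Finset.coe_image, Set.mem_image, Finset.mem_coe,
      hEo, Finset.mem_filter, Finset.mem_offDiag, Finset.mem_univ, true_and]
    constructor
    · rintro ⟨j, k, hjk, rfl, hz⟩
      exact ⟨(j, k), ⟨hjk, hz⟩, rfl⟩
    · rintro ⟨p, ⟨hne, hz⟩, rfl⟩
      exact ⟨p.1, p.2, hne, rfl, hz⟩
  have hdouble : Eo.card = 2 * F.card := by
    rw [Finset.card_eq_sum_card_image (fun p => s(p.1, p.2)) Eo, ← hF]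
    have hfib : ∀ s ∈ F, (Eo.filter (fun p => s(p.1, p.2) = s)).card = 2 := by
      intro s hs
      rw [hF, Finset.mem_image] at hs
      obtain ⟨q, hq, rfl⟩ := hs
      have hqmem := hq
      rw [hEo, Finset.mem_filter, Finset.mem_offDiag] at hqmem
      obtain ⟨⟨-, -, hne⟩, hz⟩ := hqmem
      have : Eo.filter (fun p => s(p.1, p.2) = s(q.1, q.2))
          = {(q.1, q.2), (q.2, q.1)} := by
        ext p
        simp only [Finset.mem_filter, Finset.mem_insert, Finset.mem_singleton]
        constructor
        · rintro ⟨hp, heq⟩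
          rcases Sym2.eq_iff.mp heq with ⟨h1, h2⟩ | ⟨h1, h2⟩
          · left; exact Prod.ext h1 h2
          · right; exact Prod.ext h1 h2
        · rintro (rfl | rfl)
          · exact ⟨by simpa using hq, rfl⟩
          · refine ⟨?_, Sym2.eq_swap⟩
            rw [hEo, Finset.mem_filter, Finset.mem_offDiag]
            exact ⟨⟨Finset.mem_univ _, Finset.mem_univ _, fun h => hne h.symm⟩,
              inner_eq_zero_symm.mp hz⟩
      rw [this, Finset.card_insert_of_notMem, Finset.card_singleton]
      simp only [Finset.mem_singleton, Prod.ext_iff]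
      rintro ⟨h1, h2⟩
      exact hne h1
    rw [Finset.sum_congr rfl hfib, Finset.sum_const, smul_eq_mul, mul_comm]
  rw [hset, Set.ncard_coe_finset]
  have h2F : 2 * F.card = d * (d + 1) * (d - 1) := by omega
  have hcomm : d * (d + 1) * (d - 1) = (d + 1) * d * (d - 1) := by ring
  omega
end

section
/- Let d ≥ 1, n = d(d+1), and let b_1, …, b_n be unit vectors in ℂ^d such that for every j ≠ k, |⟨b_j, b_k⟩|² equals either 0 or 1/d. Let A be the n×n matrix with A_{j,k} = 1 if j ≠ k and ⟨b_j, b_k⟩ = 0, and A_{j,k} = 0 otherwise. Then the eigenvalues of A are −1 with multiplicity d² − 1 and d − 1 with multiplicity d + 1; equivalently, the characteristic polynomial of A is (x+1)^{d²−1}(x−(d−1))^{d+1}. -/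
open Matrix Polynomial
open scoped ComplexOrder

private lemma charpoly_diagonal_aux {m : Type*} [Fintype m] [DecidableEq m]
    (v : m → ℂ) : (Matrix.diagonal v).charpoly = ∏ i, (X - C (v i)) := by
  have h : charmatrix (Matrix.diagonal v) = Matrix.diagonal (fun i => X - C (v i)) := by
    ext i j : 2
    by_cases h : i = j
    · subst h; simp [charmatrix_apply_eq]
    · rw [charmatrix_apply_ne _ _ _ h, Matrix.diagonal_apply_ne _ h,
        Matrix.diagonal_apply_ne _ h]
      simp
  rw [Matrix.charpoly, h, Matrix.det_diagonal]

private lemma charpoly_conj_aux {m : Type*} [Fintype m] [DecidableEq m]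
    (U M : Matrix m m ℂ) (h1 : U * Uᴴ = 1) (h2 : Uᴴ * U = 1) :
    (U * M * Uᴴ).charpoly = M.charpoly := by
  have hcomm : U.map C * Matrix.scalar m (X : ℂ[X]) = Matrix.scalar m (X : ℂ[X]) * U.map C :=
    (Matrix.scalar_commute (X : ℂ[X]) (Commute.all _) (U.map C)).symm
  have key : charmatrix (U * M * Uᴴ)
      = (U.map C) * charmatrix M * (Uᴴ.map C) := by
    unfold charmatrix
    simp only [mul_sub, sub_mul, RingHom.mapMatrix_apply]
    congr 1
    · rw [hcomm, mul_assoc, ← Matrix.map_mul, h1]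
      simp [Matrix.map_one]
    · rw [← Matrix.map_mul, ← Matrix.map_mul]
  rw [Matrix.charpoly, Matrix.charpoly, key, Matrix.det_mul, Matrix.det_mul,
    mul_comm, ← mul_assoc, ← Matrix.det_mul, ← Matrix.map_mul, h2]
  simp

set_option maxHeartbeats 2000000 in
/-- Let `d ≥ 1`, `n = d(d+1)`, and let `b 1, …, b n` be unit vectors in `ℂ^d`
such that for every `j ≠ k`, `|⟨b j, b k⟩|²` equals either `0` or `1/d`.  Let `A` be the
adjacency matrix of the orthogonality graph.  Then the eigenvalues of `A` are `−1` with
multiplicity `d² − 1` and `d − 1` with multiplicity `d + 1`; equivalently, the characteristic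
polynomial of `A` is `(x + 1)^(d² − 1) · (x − (d − 1))^(d + 1)`. -/
theorem charpoly_orthogonality_adjacency
    (d n : ℕ) (hd : 1 ≤ d) (hn : n = d * (d + 1))
    (b : Fin n → EuclideanSpace ℂ (Fin d))
    (hnorm : ∀ j, ‖b j‖ = 1)
    (hangles : ∀ j k, j ≠ k →
      ‖(inner ℂ (b j) (b k) : ℂ)‖ ^ 2 = 0 ∨ ‖(inner ℂ (b j) (b k) : ℂ)‖ ^ 2 = 1 / d)
    (A : Matrix (Fin n) (Fin n) ℂ)
    (hA : ∀ j k, A j k = if j ≠ k ∧ (inner ℂ (b j) (b k) : ℂ) = 0 then 1 else 0) :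
    A.charpoly = (Polynomial.X + Polynomial.C 1) ^ (d ^ 2 - 1) *
      (Polynomial.X - Polynomial.C ((d : ℂ) - 1)) ^ (d + 1) := by
  classical
  have hd0 : (d:ℂ) ≠ 0 := Nat.cast_ne_zero.mpr (Nat.one_le_iff_ne_zero.mp hd)
  have hdR : (1:ℝ) ≤ (d:ℝ) := by exact_mod_cast hd
  have hnR : (n:ℝ) = (d:ℝ) * ((d:ℝ) + 1) := by rw [hn]; push_cast; ring
  set ip : Fin n → Fin n → ℂ := fun j k => (inner ℂ (b j) (b k) : ℂ) with hipdef
  have hipsum : ∀ j k, ip j k = ∑ a, (starRingEnd ℂ) (b j a) * (b k a) := by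
    intro j k; rw [hipdef]; simp only [PiLp.inner_apply, RCLike.inner_apply]; exact Finset.sum_congr rfl fun a _ => by ring
  have hipself : ∀ j, ip j j = 1 := by
    intro j
    have := inner_self_eq_norm_sq_to_K (𝕜 := ℂ) (x := b j)
    rw [hipdef]; simp only [this, hnorm]; norm_num
  set Cm : Matrix (Fin d × Fin d) (Fin n) ℂ :=
    Matrix.of (fun p j => b j p.1 * (starRingEnd ℂ) (b j p.2)
      - if p.1 = p.2 then 1/(d:ℂ) else 0) with hCmdef
  set B : Matrix (Fin n) (Fin n) ℂ := ((d:ℂ) - 1) • 1 - A with hBdef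
  have hBentry : ∀ j k, B j k = (if j = k then (d:ℂ) - 1 else 0) - A j k := by
    intro j k
    simp [hBdef, Matrix.one_apply, Matrix.smul_apply, Matrix.sub_apply]
  have key : ∀ j k, (Cmᴴ * Cm) j k = ip j k * (starRingEnd ℂ) (ip j k) - 1/(d:ℂ) := by
    intro j k
    rw [Matrix.mul_apply]
    have hsplit : ∀ p : Fin d × Fin d, Cmᴴ j p * Cm p k
        = ((starRingEnd ℂ) (b j p.1) * b k p.1) * (b j p.2 * (starRingEnd ℂ) (b k p.2))
          - (if p.1 = p.2 then (starRingEnd ℂ) (b j p.1) * b j p.2 * (1/(d:ℂ)) else 0)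
          - (if p.1 = p.2 then b k p.1 * (starRingEnd ℂ) (b k p.2) * (1/(d:ℂ)) else 0)
          + (if p.1 = p.2 then 1/(d:ℂ)^2 else 0) := by
      rintro ⟨a, a'⟩
      simp only [conjTranspose_apply, hCmdef, Matrix.of_apply, RCLike.star_def, map_sub,
        _root_.map_mul, Complex.conj_conj, apply_ite (starRingEnd ℂ), map_zero, map_div₀,
        _root_.map_one, Complex.conj_natCast]
      by_cases h : a = a'
      · simp only [if_pos h]; ring
      · simp only [if_neg h, sub_zero]; ring
    rw [Finset.sum_congr rfl (fun p _ => hsplit p)]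
    rw [Finset.sum_add_distrib, Finset.sum_sub_distrib, Finset.sum_sub_distrib]
    have e1 : ∑ p : Fin d × Fin d,
        ((starRingEnd ℂ) (b j p.1) * b k p.1) * (b j p.2 * (starRingEnd ℂ) (b k p.2))
        = ip j k * (starRingEnd ℂ) (ip j k) := by
      rw [Fintype.sum_prod_type]
      simp only [Prod.fst, Prod.snd]
      rw [← Fintype.sum_mul_sum, hipsum]
      congr 1
      rw [map_sum]
      exact Finset.sum_congr rfl fun a _ => by rw [_root_.map_mul, Complex.conj_conj]
    have e2 : ∑ p : Fin d × Fin d,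
        (if p.1 = p.2 then (starRingEnd ℂ) (b j p.1) * b j p.2 * (1/(d:ℂ)) else 0)
        = 1/(d:ℂ) := by
      rw [Fintype.sum_prod_type]
      have h1 : ∀ a : Fin d, ∑ a' : Fin d,
          (if a = a' then (starRingEnd ℂ) (b j a) * b j a' * (1/(d:ℂ)) else 0)
          = (starRingEnd ℂ) (b j a) * b j a * (1/(d:ℂ)) := by
        intro a
        rw [Finset.sum_ite_eq]
        simp
      rw [Finset.sum_congr rfl (fun a _ => h1 a), ← Finset.sum_mul, ← hipsum, hipself]
      simp
    have e3 : ∑ p : Fin d × Fin d,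
        (if p.1 = p.2 then b k p.1 * (starRingEnd ℂ) (b k p.2) * (1/(d:ℂ)) else 0)
        = 1/(d:ℂ) := by
      rw [Fintype.sum_prod_type]
      have h1 : ∀ a : Fin d, ∑ a' : Fin d,
          (if a = a' then b k a * (starRingEnd ℂ) (b k a') * (1/(d:ℂ)) else 0)
          = (starRingEnd ℂ) (b k a) * b k a * (1/(d:ℂ)) := by
        intro a
        rw [Finset.sum_ite_eq]
        simp [mul_comm]
      rw [Finset.sum_congr rfl (fun a _ => h1 a), ← Finset.sum_mul, ← hipsum, hipself]
      simp
    have e4 : ∑ p : Fin d × Fin d, (if p.1 = p.2 then 1/(d:ℂ)^2 else 0) = 1/(d:ℂ) := by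
      rw [Fintype.sum_prod_type]
      have h1 : ∀ a : Fin d, ∑ a' : Fin d, (if a = a' then 1/(d:ℂ)^2 else 0) = 1/(d:ℂ)^2 := by
        intro a; rw [Finset.sum_ite_eq]; simp
      rw [Finset.sum_congr rfl (fun a _ => h1 a), Finset.sum_const]
      simp only [Finset.card_univ, Fintype.card_fin, nsmul_eq_mul]
      field_simp
    rw [e1, e2, e3, e4]
    ring
  have hGram : (d:ℂ) • (Cmᴴ * Cm) = B := by
    ext j k
    rw [Matrix.smul_apply, key, hBentry, smul_eq_mul]
    by_cases hjk : j = k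
    · subst hjk
      rw [hipself, if_pos rfl, hA]
      simp only [ne_eq, not_true_eq_false, false_and, if_false]
      field_simp
      simp
    · rw [if_neg hjk, hA, zero_sub]
      by_cases hip0 : ip j k = 0
      · rw [if_pos ⟨hjk, hip0⟩, hip0]
        simp [hd0]
      · rw [if_neg (by tauto)]
        have hang := hangles j k hjk
        have hnrm : ‖ip j k‖^2 = 1/(d:ℝ) := by
          rcases hang with h | h
          · exfalso; apply hip0
            rw [← norm_eq_zero]
            exact pow_eq_zero_iff (n := 2) (by norm_num) |>.mp (by exact_mod_cast h)
          · exact_mod_cast h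
        have hmc : ip j k * (starRingEnd ℂ) (ip j k) = ((‖ip j k‖^2 : ℝ) : ℂ) := by
          rw [Complex.mul_conj]
          norm_cast
          rw [← Complex.sq_norm]
        rw [hmc, hnrm]
        push_cast
        field_simp
        simp
  have hBH : B.IsHermitian := by
    rw [← hGram]
    have h1 := Matrix.isHermitian_conjTranspose_mul_self Cm
    rw [Matrix.IsHermitian, Matrix.conjTranspose_smul, h1.eq]
    congr 1
    simp [Complex.star_def]
  have hBpsd : B.PosSemidef := by
    refine .of_dotProduct_mulVec_nonneg hBH fun x => ?_
    rw [← hGram, Matrix.smul_mulVec, dotProduct_smul]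
    have h2 := (Matrix.posSemidef_conjTranspose_mul_self Cm).dotProduct_mulVec_nonneg x
    have hd' : (0:ℂ) ≤ (d:ℂ) := by
      rw [Complex.le_def]
      simp
    rw [smul_eq_mul]
    exact mul_nonneg hd' h2
  set μ : Fin n → ℝ := hBH.eigenvalues with hμdef
  have hμ0 : ∀ i, 0 ≤ μ i := hBpsd.eigenvalues_nonneg
  have hrank : Fintype.card {i // μ i ≠ 0} = B.rank := (hBH.rank_eq_card_non_zero_eigs).symm
  have hrankle : B.rank ≤ d^2 - 1 := by
    have hsm : B = ((d:ℂ) • Cmᴴ) * Cm := by rw [← hGram, Matrix.smul_mul]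
    have h1 : B.rank ≤ Cm.rank := by rw [hsm]; exact Matrix.rank_mul_le_right _ _
    have h2 : Cm.rank ≤ d^2 - 1 := by
      let f : ((Fin d × Fin d) → ℂ) →ₗ[ℂ] ℂ :=
        { toFun := fun v => ∑ a : Fin d, v (a, a)
          map_add' := fun x y => by simp [Finset.sum_add_distrib]
          map_smul' := fun c x => by simp [Finset.mul_sum] }
      have hcol : ∀ j, ∑ a : Fin d, Cm (a, a) j = 0 := by
        intro j
        have hc1 : ∀ a : Fin d, Cm (a, a) j = b j a * (starRingEnd ℂ) (b j a) - 1/(d:ℂ) := by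
          intro a; simp [hCmdef]
        rw [Finset.sum_congr rfl fun a _ => hc1 a, Finset.sum_sub_distrib]
        have hc2 : ∑ a : Fin d, b j a * (starRingEnd ℂ) (b j a) = 1 := by
          rw [← hipself j, hipsum]
          exact Finset.sum_congr rfl fun a _ => by ring
        rw [hc2, Finset.sum_const]
        simp only [Finset.card_univ, Fintype.card_fin, nsmul_eq_mul]
        field_simp
        simp
      have hrange : LinearMap.range Cm.mulVecLin ≤ LinearMap.ker f := by
        rintro _ ⟨x, rfl⟩
        simp only [LinearMap.mem_ker]
        show ∑ a : Fin d, (Cm *ᵥ x) (a, a) = 0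
        have hc3 : ∀ a : Fin d, (Cm *ᵥ x) (a, a) = ∑ j, Cm (a, a) j * x j := fun a => rfl
        rw [Finset.sum_congr rfl fun a _ => hc3 a, Finset.sum_comm]
        refine Finset.sum_eq_zero fun j _ => ?_
        rw [← Finset.sum_mul, hcol, zero_mul]
      have hfsurj : Function.Surjective f := by
        intro c
        refine ⟨Pi.single (⟨0, hd⟩, ⟨0, hd⟩) c, ?_⟩
        have hfv : f (Pi.single (⟨0, hd⟩, ⟨0, hd⟩) c)
            = ∑ a : Fin d, (Pi.single (((⟨0,hd⟩ : Fin d), (⟨0,hd⟩ : Fin d))) c : (Fin d × Fin d) → ℂ) (a, a) := rfl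
        rw [hfv, Finset.sum_eq_single (⟨0, hd⟩ : Fin d)]
        · simp
        · intro a _ ha
          rw [Pi.single_apply, if_neg (by simp [Prod.ext_iff]; tauto)]
        · intro h; exact absurd (Finset.mem_univ _) h
      have hker : Module.finrank ℂ (LinearMap.ker f) = d*d - 1 := by
        have hrn := LinearMap.finrank_range_add_finrank_ker f
        have hr1 : Module.finrank ℂ (LinearMap.range f) = 1 := by
          rw [LinearMap.range_eq_top.mpr hfsurj]
          simp
        have hdim : Module.finrank ℂ ((Fin d × Fin d) → ℂ) = d*d := by
          simp [Module.finrank_pi]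
        rw [hr1, hdim] at hrn
        omega
      have h3 : Cm.rank ≤ Module.finrank ℂ (LinearMap.ker f) := by
        rw [Matrix.rank]
        exact Submodule.finrank_mono hrange
      have hdd : d^2 = d*d := sq d
      omega
    omega
  set E : ℝ := ∑ j, ∑ k, (if j ≠ k ∧ ip j k = 0 then (1:ℝ) else 0) with hEdef
  have hAE : ∑ j, ∑ k, A j k = (E:ℂ) := by
    rw [hEdef]
    push_cast
    refine Finset.sum_congr rfl fun j _ => Finset.sum_congr rfl fun k _ => ?_
    rw [hA]
    split_ifs with h
    · norm_num
    · norm_num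
  have hEle : E ≤ (n:ℝ) * ((d:ℝ) - 1) := by
    have h1 := hBpsd.dotProduct_mulVec_nonneg (fun _ => (1:ℂ))
    have h2 : dotProduct (star (fun _ => (1:ℂ))) (B *ᵥ (fun _ => (1:ℂ)))
        = ((↑n * ((d:ℝ) - 1) - E : ℝ) : ℂ) := by
      simp only [dotProduct, Matrix.mulVec, Pi.star_apply, star_one, one_mul, mul_one]
      have h3 : ∀ j : Fin n, (∑ k, B j k) = ((d:ℂ) - 1) - ∑ k, A j k := by
        intro j
        rw [Finset.sum_congr rfl fun k _ => hBentry j k, Finset.sum_sub_distrib]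
        congr 1
        rw [Finset.sum_ite_eq]
        simp
      rw [Finset.sum_congr rfl fun j _ => h3 j, Finset.sum_sub_distrib, hAE,
        Finset.sum_const]
      simp only [Finset.card_univ, Fintype.card_fin, nsmul_eq_mul]
      push_cast
      ring
    rw [h2] at h1
    have h4 : (0:ℝ) ≤ (n:ℝ) * ((d:ℝ) - 1) - E := by
      rw [Complex.le_def] at h1
      simpa using h1.1
    linarith
  set U : Matrix (Fin n) (Fin n) ℂ := (hBH.eigenvectorUnitary : Matrix (Fin n) (Fin n) ℂ)
    with hUdef
  have hU1 : U * Uᴴ = 1 := by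
    rw [← Matrix.star_eq_conjTranspose]
    exact (Matrix.mem_unitaryGroup_iff).mp (hBH.eigenvectorUnitary).2
  have hU2 : Uᴴ * U = 1 := by
    rw [← Matrix.star_eq_conjTranspose]
    exact (Matrix.mem_unitaryGroup_iff').mp (hBH.eigenvectorUnitary).2
  set D : Matrix (Fin n) (Fin n) ℂ := Matrix.diagonal (RCLike.ofReal ∘ μ) with hDdef
  have hspec : B = U * D * Uᴴ := by
    rw [← Matrix.star_eq_conjTranspose]
    exact hBH.spectral_theorem
  have htrD : ∀ (v : Fin n → ℝ), (U * Matrix.diagonal (fun i => ((v i : ℝ) : ℂ)) * Uᴴ).trace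
      = ((∑ i, v i : ℝ) : ℂ) := by
    intro v
    rw [Matrix.trace_mul_cycle, hU2, Matrix.one_mul, Matrix.trace_diagonal]
    push_cast
    rfl
  have hDcoe : D = Matrix.diagonal (fun i => ((μ i : ℝ) : ℂ)) := rfl
  have hsum : ∑ i, μ i = (n:ℝ) * ((d:ℝ) - 1) := by
    have h1 : B.trace = ((∑ i, μ i : ℝ) : ℂ) := by
      rw [hspec, hDcoe, htrD]
    have h2 : B.trace = (((n:ℝ) * ((d:ℝ) - 1) : ℝ) : ℂ) := by
      rw [Matrix.trace]
      have h3 : ∀ j : Fin n, B.diag j = (d:ℂ) - 1 := by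
        intro j
        show B j j = _
        rw [hBentry, if_pos rfl, hA]
        simp
      rw [Finset.sum_congr rfl fun j _ => h3 j, Finset.sum_const]
      simp only [Finset.card_univ, Fintype.card_fin, nsmul_eq_mul]
      push_cast
      ring
    rw [h1] at h2
    exact_mod_cast h2
  have hsumsq : ∑ i, (μ i)^2 = (n:ℝ) * ((d:ℝ)-1)^2 + E := by
    have hBB : B * B = U * Matrix.diagonal (fun i => (((μ i)^2 : ℝ) : ℂ)) * Uᴴ := by
      rw [hspec, hDcoe]
      have : (U * Matrix.diagonal (fun i => ((μ i : ℝ) : ℂ)) * Uᴴ)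
          * (U * Matrix.diagonal (fun i => ((μ i : ℝ) : ℂ)) * Uᴴ)
          = U * (Matrix.diagonal (fun i => ((μ i : ℝ) : ℂ))
            * Matrix.diagonal (fun i => ((μ i : ℝ) : ℂ))) * Uᴴ := by
        simp only [Matrix.mul_assoc]
        rw [← Matrix.mul_assoc Uᴴ U, hU2, Matrix.one_mul]
      rw [this, Matrix.diagonal_mul_diagonal]
      have hfun : (fun i => ((μ i:ℝ):ℂ) * ((μ i:ℝ):ℂ)) = (fun i => (((μ i)^2 : ℝ) : ℂ)) := by
        funext i; push_cast; ring
      rw [hfun]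
    have h1 : (B * B).trace = ((∑ i, (μ i)^2 : ℝ) : ℂ) := by rw [hBB, htrD]
    have hprod : ∀ j k, B j k * B k j = (if j = k then ((d:ℂ)-1)^2 else 0) + A j k := by
      intro j k
      by_cases h : j = k
      · subst h
        rw [hBentry, if_pos rfl, if_pos rfl, hA]
        simp only [ne_eq, not_true_eq_false, false_and, if_false]
        ring
      · have hsym : A k j = A j k := by
          rw [hA, hA]
          refine if_congr ?_ rfl rfl
          constructor
          · rintro ⟨h1', h2'⟩; exact ⟨fun hh => h1' hh.symm, inner_eq_zero_symm.mp h2'⟩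
          · rintro ⟨h1', h2'⟩; exact ⟨fun hh => h1' hh.symm, inner_eq_zero_symm.mp h2'⟩
        have hsq : A j k * A j k = A j k := by
          rw [hA]; split_ifs <;> norm_num
        rw [hBentry j k, hBentry k j, if_neg h, if_neg (fun hh => h hh.symm),
          if_neg h, hsym]
        calc (0 - A j k) * (0 - A j k) = A j k * A j k := by ring
          _ = A j k := hsq
          _ = 0 + A j k := by ring
    have h2 : (B * B).trace = (((n:ℝ) * ((d:ℝ)-1)^2 + E : ℝ) : ℂ) := by
      rw [Matrix.trace]
      have h3 : ∀ j : Fin n, (B * B).diag j = ∑ k, B j k * B k j := fun j => Matrix.mul_apply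
      rw [Finset.sum_congr rfl fun j _ => h3 j]
      rw [Finset.sum_congr rfl fun j _ => Finset.sum_congr rfl fun k _ => hprod j k]
      rw [Finset.sum_congr rfl fun j _ => Finset.sum_add_distrib (f := fun k => if j = k then ((d:ℂ)-1)^2 else 0) (g := fun k => A j k), Finset.sum_add_distrib, hAE]
      have h4 : ∀ j : Fin n, (∑ k, if j = k then ((d:ℂ)-1)^2 else 0) = ((d:ℂ)-1)^2 := by
        intro j; rw [Finset.sum_ite_eq]; simp
      rw [Finset.sum_congr rfl fun j _ => h4 j, Finset.sum_const]
      simp only [Finset.card_univ, Fintype.card_fin, nsmul_eq_mul]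
      push_cast
      ring
    rw [h1] at h2
    exact_mod_cast h2
  set s : Finset (Fin n) := Finset.univ.filter (fun i => μ i ≠ 0) with hsdef
  have hd2 : 1 ≤ d^2 := Nat.one_le_pow _ _ (by omega)
  have hscard : s.card = d^2 - 1 ∧ ∀ i ∈ s, μ i = d := by
    have hcardsub : Fintype.card {i // μ i ≠ 0} = s.card := Fintype.card_subtype _
    have hcard_le : s.card ≤ d^2 - 1 := by omega
    have hcastle : (s.card:ℝ) ≤ (d:ℝ)^2 - 1 := by
      have h1 : ((s.card:ℕ):ℝ) ≤ ((d^2 - 1 : ℕ):ℝ) := Nat.cast_le.mpr hcard_le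
      rwa [Nat.cast_sub hd2, Nat.cast_pow, Nat.cast_one] at h1
    have hsum_s : ∑ i ∈ s, μ i = ∑ i, μ i :=
      Finset.sum_filter_of_ne (fun i _ h => h)
    have hsumsq_s : ∑ i ∈ s, (μ i)^2 = ∑ i, (μ i)^2 :=
      Finset.sum_filter_of_ne (fun i _ h => fun h0 => h (by rw [h0]; norm_num))
    have hT : ∑ i ∈ s, (μ i - d)^2
        = (∑ i, (μ i)^2) - 2*(d:ℝ)*(∑ i, μ i) + (s.card:ℝ) * (d:ℝ)^2 := by
      have hexp : ∀ i ∈ s, (μ i - d)^2 = (μ i)^2 - 2*(d:ℝ)*(μ i) + (d:ℝ)^2 :=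
        fun i _ => by ring
      rw [Finset.sum_congr rfl hexp, Finset.sum_add_distrib, Finset.sum_sub_distrib,
        hsumsq_s, ← Finset.mul_sum, hsum_s, Finset.sum_const, nsmul_eq_mul]
    have hTnonneg : 0 ≤ ∑ i ∈ s, (μ i - d)^2 :=
      Finset.sum_nonneg fun i _ => sq_nonneg _
    have hTle : ∑ i ∈ s, (μ i - d)^2 ≤ (d:ℝ)^2 * ((s.card:ℝ) - ((d:ℝ)^2 - 1)) := by
      have hEle' : E ≤ (d:ℝ)*((d:ℝ)+1)*((d:ℝ)-1) := by
        rw [hnR] at hEle; linarith [hEle]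
      rw [hT, hsum, hsumsq, hnR]
      linarith [hEle']
    have hd2pos : (0:ℝ) < (d:ℝ)^2 := by nlinarith [hdR]
    have hcge : ((d:ℝ)^2 - 1) ≤ (s.card:ℝ) := by
      by_contra hcon
      push_neg at hcon
      have hneg : (d:ℝ)^2 * ((s.card:ℝ) - ((d:ℝ)^2 - 1)) < 0 :=
        mul_neg_of_pos_of_neg hd2pos (by linarith)
      linarith
    have hceqR : (s.card:ℝ) = (d:ℝ)^2 - 1 := le_antisymm hcastle hcge
    have hceq : s.card = d^2 - 1 := by
      have h2 : ((s.card:ℕ):ℝ) = ((d^2 - 1:ℕ):ℝ) := by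
        rw [hceqR, Nat.cast_sub hd2]; push_cast; ring
      exact_mod_cast h2
    have hT0 : ∑ i ∈ s, (μ i - d)^2 = 0 := by
      have h5 : (d:ℝ)^2 * ((s.card:ℝ) - ((d:ℝ)^2 - 1)) = 0 := by rw [hceqR]; ring
      linarith [hTle, hTnonneg, h5.le, h5.ge]
    refine ⟨hceq, fun i hi => ?_⟩
    have h6 := (Finset.sum_eq_zero_iff_of_nonneg (fun i _ => sq_nonneg (μ i - d))).mp hT0 i hi
    have h7 : μ i - d = 0 := by
      have := sq_eq_zero_iff.mp h6
      exact this
    linarith [h7]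
  -- final charpoly computation
  have hAspec : A = U * Matrix.diagonal (fun i => ((d:ℂ)-1) - ((μ i:ℝ):ℂ)) * Uᴴ := by
    have h0 : A = ((d:ℂ)-1) • (1 : Matrix (Fin n) (Fin n) ℂ) - B := by
      rw [hBdef]; exact (sub_sub_cancel _ _).symm
    have h1 : ((d:ℂ)-1) • (1 : Matrix (Fin n) (Fin n) ℂ) = U * (((d:ℂ)-1) • 1) * Uᴴ := by
      rw [Matrix.mul_smul, Matrix.smul_mul, Matrix.mul_one, hU1]
    rw [h0, hspec, h1, ← Matrix.sub_mul, ← Matrix.mul_sub]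
    congr 2
    rw [hDcoe]
    ext i j
    by_cases h : i = j
    · subst h
      simp [Matrix.diagonal_apply_eq, Matrix.smul_apply, Matrix.one_apply_eq]
    · simp [Matrix.diagonal_apply_ne _ h, Matrix.one_apply_ne h]
  rw [hAspec, charpoly_conj_aux _ _ hU1 hU2, charpoly_diagonal_aux]
  rw [← Finset.prod_filter_mul_prod_filter_not Finset.univ (fun i => μ i ≠ 0)]
  have hp1 : ∀ i ∈ s, (X - C (((d:ℂ)-1) - ((μ i:ℝ):ℂ))) = X + C 1 := by
    intro i hi
    rw [hscard.2 i hi]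
    have h8 : ((d:ℂ)-1) - (((d:ℕ):ℝ):ℂ) = -1 := by push_cast; ring
    rw [h8, map_neg, sub_neg_eq_add]
  have hp2 : ∀ i ∈ Finset.univ.filter (fun i => ¬ μ i ≠ 0),
      (X - C (((d:ℂ)-1) - ((μ i:ℝ):ℂ))) = X - C ((d:ℂ)-1) := by
    intro i hi
    have h9 : μ i = 0 := not_not.mp (Finset.mem_filter.mp hi).2
    rw [h9]
    norm_num
  have hc2 : (Finset.univ.filter (fun i => ¬ μ i ≠ 0)).card = d + 1 := by
    have h := Finset.card_filter_add_card_filter_not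
      (s := (Finset.univ : Finset (Fin n))) (p := fun i => μ i ≠ 0)
    rw [Finset.card_univ, Fintype.card_fin] at h
    have hsc : (Finset.univ.filter (fun i => μ i ≠ 0)).card = d^2 - 1 := hscard.1
    rw [hsc] at h
    have h2 : d^2 + d = n := by rw [hn]; ring
    obtain ⟨e, he⟩ : ∃ e, d^2 = e := ⟨_, rfl⟩
    rw [he] at h hd2 h2
    omega
  rw [Finset.prod_congr rfl hp1, Finset.prod_congr rfl hp2, Finset.prod_const,
    Finset.prod_const, hc2, hscard.1]
end

section
/- Let d ≥ 1, n = d(d+1), and let b_1, …, b_n be unit vectors in ℂ^d such that for every j ≠ k, |⟨b_j, b_k⟩|² equals either 0 or 1/d. Then for every index j, the number of indices k ≠ j with ⟨b_j, b_k⟩ = 0 is exactly d − 1 (i.e. the orthogonality graph of the vectors is (d−1)-regular). -/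
namespace OrthAux

open Finset Module LinearMap
open scoped ComplexConjugate

attribute [local instance] Classical.propDecidable

variable {d n : ℕ} (b : Fin n → EuclideanSpace ℂ (Fin d))

/-- pairwise inner products -/
noncomputable def q (j k : Fin n) : ℂ := inner ℂ (b j) (b k)

lemma q_apply (j k : Fin n) : q b j k = ∑ a, conj (b j a) * b k a := by
  simp [q, PiLp.inner_apply, RCLike.inner_apply]
  exact Finset.sum_congr rfl fun _ _ => mul_comm _ _

lemma q_self (hnorm : ∀ j, ‖b j‖ = 1) (j : Fin n) : q b j j = 1 := by
  have : (inner ℂ (b j) (b j) : ℂ) = (‖b j‖ : ℂ) ^ 2 := inner_self_eq_norm_sq_to_K (b j)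
  simp [q, this, hnorm j]

lemma q_symm (j k : Fin n) : q b k j = conj (q b j k) := by
  simp only [q]
  exact (inner_conj_symm (b k) (b j)).symm

/-- traceless projector-like matrices -/
noncomputable def QM (j : Fin n) : Matrix (Fin d) (Fin d) ℂ :=
  Matrix.of fun a a' => b j a * conj (b j a') - (if a = a' then ((d : ℂ))⁻¹ else 0)

lemma sum_self (hnorm : ∀ j, ‖b j‖ = 1) (j : Fin n) :
    ∑ a : Fin d, conj (b j a) * b j a = 1 := by
  have := q_self b hnorm j; rwa [q_apply] at this

lemma trace_QM (hnorm : ∀ j, ‖b j‖ = 1) (hd : 1 ≤ d) (j : Fin n) :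
    Matrix.trace (QM b j) = 0 := by
  have h1 : ∑ a : Fin d, b j a * conj (b j a) = 1 := by
    rw [← sum_self b hnorm j]; exact Finset.sum_congr rfl fun a _ => by ring
  have hd0 : (d : ℂ) ≠ 0 := Nat.cast_ne_zero.2 (by omega)
  simp [Matrix.trace, Matrix.diag, QM, Finset.sum_sub_distrib, h1, mul_inv_cancel₀ hd0]

noncomputable def gam (j k : Fin n) : ℂ :=
  ∑ a, ∑ a', conj (QM b j a a') * QM b k a a'

/-- real coefficients -/
noncomputable def creal (j k : Fin n) : ℝ := ‖q b j k‖ ^ 2 - (d : ℝ)⁻¹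

lemma gam_eq (hnorm : ∀ j, ‖b j‖ = 1) (hd : 1 ≤ d) (j k : Fin n) :
    gam b j k = ((creal b j k : ℝ) : ℂ) := by
  have hd0 : (d : ℂ) ≠ 0 := Nat.cast_ne_zero.2 (by omega)
  have expand : ∀ a a' : Fin d, conj (QM b j a a') * QM b k a a' =
      (conj (b j a) * b k a) * (b j a' * conj (b k a'))
      - (if a = a' then (d:ℂ)⁻¹ * (conj (b j a) * b j a') else 0)
      - (if a = a' then (d:ℂ)⁻¹ * (b k a * conj (b k a')) else 0)
      + (if a = a' then (d:ℂ)⁻¹ * (d:ℂ)⁻¹ else 0) := by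
    intro a a'
    have hc : conj (if a = a' then ((d : ℂ))⁻¹ else 0) = (if a = a' then ((d : ℂ))⁻¹ else 0) := by
      split <;> simp
    simp only [QM, Matrix.of_apply, map_sub, map_mul, Complex.conj_conj, hc]
    split <;> ring
  have hgam : gam b j k =
      (∑ a, conj (b j a) * b k a) * (∑ a', b j a' * conj (b k a'))
      - (d:ℂ)⁻¹ * (∑ a, conj (b j a) * b j a)
      - (d:ℂ)⁻¹ * (∑ a, b k a * conj (b k a))
      + (d : ℂ) * ((d:ℂ)⁻¹ * (d:ℂ)⁻¹) := by
    unfold gam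
    rw [Finset.sum_congr rfl fun a _ => Finset.sum_congr rfl fun a' _ => expand a a']
    simp only [Finset.sum_add_distrib, Finset.sum_sub_distrib, Finset.sum_ite_eq,
      Finset.mem_univ, if_true, ← Finset.mul_sum, Finset.sum_const, Finset.card_univ,
      Fintype.card_fin, nsmul_eq_mul]
    rw [← Finset.sum_mul]
    ring
  have hq : (∑ a, conj (b j a) * b k a) * (∑ a', b j a' * conj (b k a'))
      = ((‖q b j k‖ ^ 2 : ℝ) : ℂ) := by
    have h1 : (∑ a, conj (b j a) * b k a) = q b j k := (q_apply b j k).symm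
    have h2 : (∑ a', b j a' * conj (b k a')) = conj (q b j k) := by
      rw [q_apply, map_sum]
      exact Finset.sum_congr rfl fun a _ => by simp [mul_comm]
    rw [h1, h2, Complex.mul_conj]
    norm_cast
    simp [Complex.sq_norm]
  have hsk : ∑ a : Fin d, b k a * conj (b k a) = 1 := by
    rw [← sum_self b hnorm k]; exact Finset.sum_congr rfl fun a _ => by ring
  rw [hgam, hq, sum_self b hnorm j, hsk, creal]
  push_cast
  field_simp
  ring

noncomputable def fmap : (Fin n → ℂ) →ₗ[ℂ] Matrix (Fin d) (Fin d) ℂ where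
  toFun v := ∑ j, v j • QM b j
  map_add' x y := by simp [add_smul, Finset.sum_add_distrib]
  map_smul' c x := by simp [smul_smul, Finset.smul_sum]

noncomputable def gmap : Matrix (Fin d) (Fin d) ℂ →ₗ[ℂ] (Fin n → ℂ) where
  toFun M := fun j => ∑ a, ∑ a', conj (QM b j a a') * M a a'
  map_add' x y := by
    funext j
    simp [mul_add, Finset.sum_add_distrib]
  map_smul' c x := by
    funext j
    simp only [Matrix.smul_apply, smul_eq_mul, RingHom.id_apply, Pi.smul_apply]
    rw [Finset.mul_sum]
    exact Finset.sum_congr rfl fun a _ => by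
      rw [Finset.mul_sum]
      exact Finset.sum_congr rfl fun a' _ => by ring

noncomputable def Lmap : (Fin n → ℂ) →ₗ[ℂ] (Fin n → ℂ) := (gmap b).comp (fmap b)

lemma Lmap_apply (v : Fin n → ℂ) (j : Fin n) :
    Lmap b v j = ∑ k, gam b j k * v k := by
  show ∑ a, ∑ a', conj (QM b j a a') * (∑ k, v k • QM b k) a a' = _
  have h1 : ∀ a a', conj (QM b j a a') * (∑ k, v k • QM b k) a a'
      = ∑ k, (conj (QM b j a a') * QM b k a a') * v k := by
    intro a a'
    simp [Matrix.sum_apply, Finset.mul_sum]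
    exact Finset.sum_congr rfl fun _ _ => by ring
  simp only [h1]
  rw [Finset.sum_congr rfl fun a _ => Finset.sum_comm, Finset.sum_comm]
  refine Finset.sum_congr rfl fun k _ => ?_
  rw [gam, Finset.sum_mul]
  exact Finset.sum_congr rfl fun a _ => by rw [Finset.sum_mul]

lemma finrank_ker_Lmap (hnorm : ∀ j, ‖b j‖ = 1) (hd : 1 ≤ d) (hn : n = d * (d + 1)) :
    d + 1 ≤ Module.finrank ℂ (LinearMap.ker (Lmap b)) := by
  classical
  set tr := Matrix.traceLinearMap (Fin d) ℂ ℂ with htr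
  have htr_surj : LinearMap.range tr = ⊤ := by
    rw [LinearMap.range_eq_top]
    intro x
    refine ⟨Matrix.diagonal (Pi.single ⟨0, by omega⟩ x), ?_⟩
    simp [htr, Matrix.trace_diagonal]
  have hker_tr : Module.finrank ℂ (LinearMap.ker tr) = d * d - 1 := by
    have h := LinearMap.finrank_range_add_finrank_ker tr
    rw [htr_surj] at h
    rw [finrank_top] at h
    have h2 : Module.finrank ℂ (Matrix (Fin d) (Fin d) ℂ) = d * d := by
      simp [Module.finrank_matrix]
    have h3 : Module.finrank ℂ ℂ = 1 := Module.finrank_self ℂ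
    omega
  have hrange_f : LinearMap.range (fmap b) ≤ LinearMap.ker tr := by
    rintro M ⟨v, rfl⟩
    simp only [LinearMap.mem_ker]
    show Matrix.trace (∑ j, v j • QM b j) = 0
    rw [Matrix.trace_sum]
    simp [Matrix.trace_smul, trace_QM b hnorm hd]
  have hrank : Module.finrank ℂ (LinearMap.range (Lmap b)) ≤ d * d - 1 := by
    rw [Lmap, LinearMap.range_comp]
    calc Module.finrank ℂ (Submodule.map (gmap b) (LinearMap.range (fmap b)))
        ≤ Module.finrank ℂ (LinearMap.range (fmap b)) := Submodule.finrank_map_le _ _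
      _ ≤ Module.finrank ℂ (LinearMap.ker tr) := Submodule.finrank_mono hrange_f
      _ = d * d - 1 := hker_tr
  have h := LinearMap.finrank_range_add_finrank_ker (Lmap b)
  have hpi : Module.finrank ℂ (Fin n → ℂ) = n := by simp
  rw [hpi] at h
  have hn' : n = d * d + d := by rw [hn]; ring
  clear hpi hrange_f htr_surj hker_tr
  generalize hK : Module.finrank ℂ ↥(LinearMap.ker (Lmap b)) = K at h ⊢
  generalize hR : Module.finrank ℂ ↥(LinearMap.range (Lmap b)) = R at h hrank
  have hdd1 : 1 * 1 ≤ d * d := Nat.mul_le_mul hd hd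
  generalize hD : d * d = D at hn' hrank hdd1
  omega

/-! ### Graph structure -/

def Adj (j k : Fin n) : Prop := k ≠ j ∧ q b j k = 0

lemma adj_comm (j k : Fin n) : Adj b j k ↔ Adj b k j := by
  unfold Adj
  rw [q_symm b j k]
  constructor
  · rintro ⟨h1, h2⟩; exact ⟨h1.symm, by simp [h2]⟩
  · rintro ⟨h1, h2⟩
    refine ⟨h1.symm, ?_⟩
    have := congrArg conj h2
    simpa using this

noncomputable def Gr : SimpleGraph (Fin n) where
  Adj := Adj b
  symm := ⟨fun j k h => (adj_comm b j k).1 h⟩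
  loopless := ⟨fun j h => h.1 rfl⟩

noncomputable def N (j : Fin n) : Finset (Fin n) := Finset.univ.filter (Adj b j)

lemma mem_N {j k : Fin n} : k ∈ N b j ↔ Adj b j k := by simp [N]

lemma creal_eq (hnorm : ∀ j, ‖b j‖ = 1)
    (hangles : ∀ j k, j ≠ k →
      ‖(inner ℂ (b j) (b k) : ℂ)‖ ^ 2 = 0 ∨ ‖(inner ℂ (b j) (b k) : ℂ)‖ ^ 2 = 1 / d)
    (j k : Fin n) :
    creal b j k = (if k = j then 1 - (d:ℝ)⁻¹ else 0)
      + (if k ∈ N b j then -(d:ℝ)⁻¹ else 0) := by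
  by_cases hkj : k = j
  · subst hkj
    have hnot : k ∉ N b k := by simp [mem_N, Adj]
    simp only [if_pos rfl, if_neg hnot, add_zero]
    rw [creal, q_self b hnorm]
    norm_num
  · by_cases hadj : k ∈ N b j
    · have h0 : q b j k = 0 := ((mem_N b).1 hadj).2
      simp only [if_neg hkj, if_pos hadj]
      rw [creal, h0]
      norm_num
    · have hne : j ≠ k := fun h => hkj h.symm
      rcases hangles j k hne with h | h
      · exfalso
        apply hadj
        rw [mem_N]
        refine ⟨hkj, ?_⟩
        have : ‖q b j k‖ = 0 := by
          have := sq_eq_zero_iff.1 h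
          exact this
        exact norm_eq_zero.1 this
      · simp only [if_neg hkj, if_neg hadj, add_zero]
        rw [creal]
        show ‖(inner ℂ (b j) (b k) : ℂ)‖^2 - (d:ℝ)⁻¹ = 0
        rw [h, one_div]
        ring

/-- kernel condition, complex version -/
def Kcx (v : Fin n → ℂ) : Prop := ∀ j, ((d:ℂ) - 1) * v j = ∑ k ∈ N b j, v k

/-- kernel condition, real version -/
def Kreal (v : Fin n → ℝ) : Prop := ∀ j, ((d:ℝ) - 1) * v j = ∑ k ∈ N b j, v k

section WithHyps

variable (hd : 1 ≤ d) (hnorm : ∀ j, ‖b j‖ = 1)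
  (hangles : ∀ j k, j ≠ k →
      ‖(inner ℂ (b j) (b k) : ℂ)‖ ^ 2 = 0 ∨ ‖(inner ℂ (b j) (b k) : ℂ)‖ ^ 2 = 1 / d)

include hd hnorm hangles

lemma sum_creal_mul (v : Fin n → ℝ) (j : Fin n) :
    ∑ k, creal b j k * v k
      = (1 - (d:ℝ)⁻¹) * v j - (d:ℝ)⁻¹ * ∑ k ∈ N b j, v k := by
  have h1 : ∑ k, (if k = j then (1 - (d:ℝ)⁻¹) else 0) * v k = (1 - (d:ℝ)⁻¹) * v j := by
    simp only [ite_mul, zero_mul]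
    rw [Finset.sum_ite_eq' Finset.univ j]
    simp
  have h2 : ∑ k, (if k ∈ N b j then -(d:ℝ)⁻¹ else 0) * v k
      = -((d:ℝ)⁻¹ * ∑ k ∈ N b j, v k) := by
    simp only [ite_mul, zero_mul]
    rw [Finset.sum_ite_mem, Finset.univ_inter, ← Finset.mul_sum]
    ring
  calc ∑ k, creal b j k * v k
      = ∑ k, ((if k = j then (1 - (d:ℝ)⁻¹) else 0) * v k
          + (if k ∈ N b j then -(d:ℝ)⁻¹ else 0) * v k) :=
        Finset.sum_congr rfl fun k _ => by
          rw [creal_eq b hnorm hangles j k]; ring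
    _ = (1 - (d:ℝ)⁻¹) * v j - (d:ℝ)⁻¹ * ∑ k ∈ N b j, v k := by
        rw [Finset.sum_add_distrib, h1, h2]; ring

lemma sum_gam_mul (v : Fin n → ℂ) (j : Fin n) :
    ∑ k, gam b j k * v k
      = (1 - (d:ℂ)⁻¹) * v j - (d:ℂ)⁻¹ * ∑ k ∈ N b j, v k := by
  have hc : ∀ k, gam b j k = (if k = j then 1 - (d:ℂ)⁻¹ else 0)
      + (if k ∈ N b j then -(d:ℂ)⁻¹ else 0) := by
    intro k
    rw [gam_eq b hnorm hd j k, creal_eq b hnorm hangles j k]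
    split_ifs <;> push_cast <;> ring
  have h1 : ∑ k, (if k = j then (1 - (d:ℂ)⁻¹) else 0) * v k = (1 - (d:ℂ)⁻¹) * v j := by
    simp only [ite_mul, zero_mul]
    rw [Finset.sum_ite_eq' Finset.univ j]
    simp
  have h2 : ∑ k, (if k ∈ N b j then -(d:ℂ)⁻¹ else 0) * v k
      = -((d:ℂ)⁻¹ * ∑ k ∈ N b j, v k) := by
    simp only [ite_mul, zero_mul]
    rw [Finset.sum_ite_mem, Finset.univ_inter, ← Finset.mul_sum]
    ring
  calc ∑ k, gam b j k * v k
      = ∑ k, ((if k = j then (1 - (d:ℂ)⁻¹) else 0) * v k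
          + (if k ∈ N b j then -(d:ℂ)⁻¹ else 0) * v k) :=
        Finset.sum_congr rfl fun k _ => by rw [hc k]; ring
    _ = (1 - (d:ℂ)⁻¹) * v j - (d:ℂ)⁻¹ * ∑ k ∈ N b j, v k := by
        rw [Finset.sum_add_distrib, h1, h2]; ring

lemma ker_iff_Kcx (v : Fin n → ℂ) :
    v ∈ LinearMap.ker (Lmap b) ↔ Kcx b v := by
  have hd0 : (d : ℂ) ≠ 0 := Nat.cast_ne_zero.2 (by omega)
  have hfac : ∀ j, (1 - (d:ℂ)⁻¹) * v j - (d:ℂ)⁻¹ * ∑ k ∈ N b j, v k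
      = (d:ℂ)⁻¹ * (((d:ℂ) - 1) * v j - ∑ k ∈ N b j, v k) := by
    intro j; linear_combination (-(v j)) * inv_mul_cancel₀ hd0
  rw [LinearMap.mem_ker, funext_iff]
  unfold Kcx
  constructor
  · intro h j
    have e := h j
    rw [Lmap_apply, sum_gam_mul b hd hnorm hangles, hfac] at e
    rcases mul_eq_zero.1 e with h' | h'
    · exact absurd h' (inv_ne_zero hd0)
    · exact sub_eq_zero.1 h'
  · intro h j
    show Lmap b v j = (0 : Fin n → ℂ) j
    rw [Lmap_apply, sum_gam_mul b hd hnorm hangles]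
    show _ = (0:ℂ)
    rw [hfac, h j, sub_self, mul_zero]

omit hd hnorm hangles in
lemma psd_complex (hnorm : ∀ j, ‖b j‖ = 1) (hd : 1 ≤ d) (v : Fin n → ℝ) :
    0 ≤ ∑ j, ∑ k, v j * v k * creal b j k := by
  classical
  set M : Fin d → Fin d → ℂ := fun a a' => ∑ j, (v j : ℂ) * QM b j a a' with hM
  have key : ∀ j k : Fin n, ((v j : ℂ)) * (v k) * gam b j k
      = ∑ a, ∑ a', ((v j : ℂ) * conj (QM b j a a')) * ((v k : ℂ) * QM b k a a') := by
    intro j k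
    rw [gam, Finset.mul_sum]
    refine Finset.sum_congr rfl fun a _ => ?_
    rw [Finset.mul_sum]
    exact Finset.sum_congr rfl fun a' _ => by ring
  have swap : ∑ j, ∑ k, ((v j : ℂ)) * (v k) * gam b j k
      = ∑ a, ∑ a', conj (M a a') * M a a' := by
    rw [Finset.sum_congr rfl fun j (_ : j ∈ Finset.univ) =>
      Finset.sum_congr rfl fun k (_ : k ∈ Finset.univ) => key j k]
    rw [Finset.sum_congr rfl fun j (_ : j ∈ Finset.univ) => Finset.sum_comm]
    rw [Finset.sum_congr rfl fun j (_ : j ∈ Finset.univ) =>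
      Finset.sum_congr rfl fun a (_ : a ∈ Finset.univ) => Finset.sum_comm]
    rw [Finset.sum_comm]
    refine Finset.sum_congr rfl fun a _ => ?_
    rw [Finset.sum_comm]
    refine Finset.sum_congr rfl fun a' _ => ?_
    rw [← Finset.sum_mul_sum]
    congr 1
    rw [hM, map_sum]
    exact Finset.sum_congr rfl fun j _ => by simp
  have hre : ((∑ j, ∑ k, v j * v k * creal b j k : ℝ) : ℂ)
      = ∑ j, ∑ k, ((v j : ℂ)) * (v k) * gam b j k := by
    push_cast
    refine Finset.sum_congr rfl fun j _ => Finset.sum_congr rfl fun k _ => ?_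
    rw [gam_eq b hnorm hd]
  have hnn : ((∑ j, ∑ k, v j * v k * creal b j k : ℝ) : ℂ)
      = ((∑ a, ∑ a', Complex.normSq (M a a') : ℝ) : ℂ) := by
    rw [hre, swap]
    push_cast
    refine Finset.sum_congr rfl fun a _ => Finset.sum_congr rfl fun a' _ => ?_
    rw [mul_comm, Complex.mul_conj]
  have := Complex.ofReal_injective hnn
  rw [this]
  exact Finset.sum_nonneg fun a _ => Finset.sum_nonneg fun a' _ => Complex.normSq_nonneg _

/-- neighbourhood sum -/
noncomputable def SS (v : Fin n → ℝ) (j : Fin n) : ℝ := ∑ k ∈ N b j, v k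

/-- the PSD quadratic form (scaled by `d`) -/
noncomputable def Bq (v : Fin n → ℝ) : ℝ :=
  ((d:ℝ) - 1) * ∑ j, (v j)^2 - ∑ j, v j * SS b v j

lemma Bq_nonneg (v : Fin n → ℝ) : 0 ≤ Bq b v := by
  have h := psd_complex b hnorm hd v
  have hrw : ∑ j, ∑ k, v j * v k * creal b j k
      = (1 - (d:ℝ)⁻¹) * ∑ j, (v j)^2 - (d:ℝ)⁻¹ * ∑ j, v j * SS b v j := by
    rw [Finset.sum_congr rfl fun j (_ : j ∈ Finset.univ) => show
        ∑ k, v j * v k * creal b j k = v j * ∑ k, creal b j k * v k by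
      rw [Finset.mul_sum]; exact Finset.sum_congr rfl fun k _ => by ring]
    rw [Finset.sum_congr rfl fun j (_ : j ∈ Finset.univ) => by
      rw [sum_creal_mul b hd hnorm hangles v j]]
    simp only [mul_sub, Finset.sum_sub_distrib]
    rw [Finset.mul_sum, Finset.mul_sum]
    congr 1
    · exact Finset.sum_congr rfl fun j _ => by ring
    · exact Finset.sum_congr rfl fun j _ => by rw [SS]; ring
  rw [hrw] at h
  have hdpos : (0:ℝ) < d := by exact_mod_cast Nat.lt_of_lt_of_le Nat.zero_lt_one hd
  have h2 := mul_nonneg hdpos.le h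
  have h3 : (d:ℝ) * ((1 - (d:ℝ)⁻¹) * ∑ j, (v j)^2 - (d:ℝ)⁻¹ * ∑ j, v j * SS b v j)
      = Bq b v := by
    rw [Bq]
    field_simp
    try ring
  rw [h3] at h2
  exact h2

omit hd hnorm hangles in
lemma SS_symm (x y : Fin n → ℝ) :
    ∑ j, x j * SS b y j = ∑ j, y j * SS b x j := by
  have key : ∀ x y : Fin n → ℝ, ∑ j, x j * SS b y j
      = ∑ j, ∑ k, (if Adj b j k then x j * y k else 0) := by
    intro x y
    refine Finset.sum_congr rfl fun j _ => ?_
    rw [SS, Finset.mul_sum, N, Finset.sum_filter]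
  rw [key, key, Finset.sum_comm]
  refine Finset.sum_congr rfl fun j _ => Finset.sum_congr rfl fun k _ => ?_
  rw [← adj_comm]
  split_ifs <;> ring

lemma beta_zero (u : Fin n → ℝ) (hu : Bq b u = 0) (x : Fin n → ℝ) :
    ((d:ℝ) - 1) * ∑ j, x j * u j = ∑ j, x j * SS b u j := by
  set A := Bq b x with hA
  set β := ((d:ℝ) - 1) * ∑ j, x j * u j - ∑ j, x j * SS b u j with hβ
  have expand : ∀ t : ℝ, Bq b (fun j => x j + t * u j) = A + 2 * t * β := by
    intro t
    have hSS : ∀ j, SS b (fun j => x j + t * u j) j = SS b x j + t * SS b u j := by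
      intro j
      rw [SS, SS, SS, Finset.sum_add_distrib, Finset.mul_sum]
    rw [Bq]
    rw [Finset.sum_congr rfl fun j (_ : j ∈ Finset.univ) => show
        (x j + t * u j)^2 = x j ^2 + 2*t*(x j * u j) + t^2 * u j ^2 by ring]
    rw [Finset.sum_congr rfl fun j (_ : j ∈ Finset.univ) => show
        (x j + t * u j) * SS b (fun j => x j + t * u j) j
        = x j * SS b x j + t * (x j * SS b u j) + t * (u j * SS b x j)
          + t^2 * (u j * SS b u j) by rw [hSS]; ring]
    simp only [Finset.sum_add_distrib]
    rw [← Finset.mul_sum, ← Finset.mul_sum, ← Finset.mul_sum, ← Finset.mul_sum,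
      ← Finset.mul_sum]
    rw [SS_symm b u x]
    have hBu : ((d:ℝ) - 1) * ∑ j, (u j)^2 - ∑ j, u j * SS b u j = 0 := hu
    rw [hA, Bq, hβ]
    nlinarith [hBu]
  by_contra hne
  have hbne : β ≠ 0 := fun h0 => hne (by rw [hβ] at h0; linarith)
  have h0 := Bq_nonneg b hd hnorm hangles (fun j => x j + ((-(A+1))/(2*β)) * u j)
  rw [expand ((-(A+1))/(2*β))] at h0
  rw [show 2 * ((-(A+1))/(2*β)) * β = -(A+1) by field_simp] at h0
  have hA0 : 0 ≤ A := Bq_nonneg b hd hnorm hangles x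
  linarith

lemma kreal_abs {v : Fin n → ℝ} (hv : Kreal b v) : Kreal b (fun k => |v k|) := by
  set u : Fin n → ℝ := fun k => |v k| with hu
  have hd1 : (0:ℝ) ≤ (d:ℝ) - 1 := by
    have : (1:ℝ) ≤ d := by exact_mod_cast hd
    linarith
  have hpt : ∀ j, ((d:ℝ) - 1) * u j ≤ SS b u j := by
    intro j
    calc ((d:ℝ) - 1) * u j = |((d:ℝ) - 1) * v j| := by
          rw [abs_mul, abs_of_nonneg hd1]
      _ = |∑ k ∈ N b j, v k| := by rw [hv j]
      _ ≤ ∑ k ∈ N b j, |v k| := Finset.abs_sum_le_sum_abs _ _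
      _ = SS b u j := rfl
  have hBu : Bq b u = 0 := by
    have hle : Bq b u ≤ 0 := by
      rw [Bq]
      have : ((d:ℝ) - 1) * ∑ j, (u j)^2 ≤ ∑ j, u j * SS b u j := by
        rw [Finset.mul_sum]
        refine Finset.sum_le_sum fun j _ => ?_
        calc ((d:ℝ)-1) * u j ^ 2 = u j * (((d:ℝ)-1) * u j) := by ring
          _ ≤ u j * SS b u j := mul_le_mul_of_nonneg_left (hpt j) (abs_nonneg _)
      linarith
    exact le_antisymm hle (Bq_nonneg b hd hnorm hangles u)
  intro j
  have := beta_zero b hd hnorm hangles u hBu (fun k => if k = j then 1 else 0)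
  simp only [ite_mul, one_mul, zero_mul] at this
  rw [Finset.sum_ite_eq' Finset.univ j, Finset.sum_ite_eq' Finset.univ j] at this
  simpa [SS] using this

lemma pos_adj (hd2 : 2 ≤ d) {u : Fin n → ℝ} (hK : Kreal b u) (hpos : ∀ k, 0 ≤ u k)
    {j k : Fin n} (hj : 0 < u j) (hadj : Adj b j k) : 0 < u k := by
  have hjk : j ∈ N b k := (mem_N b).2 ((adj_comm b j k).1 hadj)
  have h1 : u j ≤ ∑ l ∈ N b k, u l :=
    Finset.single_le_sum (fun l _ => hpos l) hjk
  have h2 : 0 < ((d:ℝ) - 1) * u k := by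
    rw [hK k]; exact lt_of_lt_of_le hj h1
  by_contra hk
  push_neg at hk
  have : u k = 0 := le_antisymm hk (hpos k)
  rw [this, mul_zero] at h2
  exact lt_irrefl 0 h2

lemma pos_reachable (hd2 : 2 ≤ d) {u : Fin n → ℝ} (hK : Kreal b u) (hpos : ∀ k, 0 ≤ u k)
    {j k : Fin n} (hj : 0 < u j) (hreach : (Gr b).Reachable j k) : 0 < u k := by
  obtain ⟨w⟩ := hreach
  induction w with
  | nil => exact hj
  | cons h p ih => exact ih (pos_adj b hd hnorm hangles hd2 hK hpos hj h)

omit hd hnorm hangles in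
lemma kreal_re {v : Fin n → ℂ} (hv : Kcx b v) : Kreal b (fun k => (v k).re) := by
  intro j
  have h := congrArg Complex.re (hv j)
  rw [show ((d:ℂ) - 1) = (((d:ℝ) - 1 : ℝ) : ℂ) by push_cast; ring] at h
  rw [Complex.re_ofReal_mul, Complex.re_sum] at h
  exact h

omit hd hnorm hangles in
lemma kreal_im {v : Fin n → ℂ} (hv : Kcx b v) : Kreal b (fun k => (v k).im) := by
  intro j
  have h := congrArg Complex.im (hv j)
  rw [show ((d:ℂ) - 1) = (((d:ℝ) - 1 : ℝ) : ℂ) by push_cast; ring] at h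
  rw [Complex.im_ofReal_mul, Complex.im_sum] at h
  exact h

omit hd hnorm hangles in
lemma kcx_of_kreal {u : Fin n → ℝ} (hu : Kreal b u) : Kcx b (fun k => ((u k : ℝ) : ℂ)) := by
  intro j
  have h := hu j
  have := congrArg (fun x : ℝ => (x : ℂ)) h
  push_cast at this
  convert this using 2 <;> push_cast <;> ring

/-- a vanishing-at-a-point real kernel vector supported in one component vanishes -/
lemma real_vanish (hd2 : 2 ≤ d) {r : Fin n → ℝ} (hr : Kreal b r) (j₀ : Fin n)
    (hsupp : ∀ k, r k ≠ 0 → (Gr b).connectedComponentMk k = (Gr b).connectedComponentMk j₀)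
    (h0 : r j₀ = 0) : ∀ k, r k = 0 := by
  intro k
  by_contra hk
  have habs : Kreal b (fun k => |r k|) := kreal_abs b hd hnorm hangles hr
  have hpos : 0 < |r k| := abs_pos.2 hk
  have hreach : (Gr b).Reachable k j₀ := SimpleGraph.ConnectedComponent.exact (hsupp k hk)
  have := pos_reachable b hd hnorm hangles hd2 habs (fun l => abs_nonneg _) hpos hreach
  rw [h0] at this
  simp at this

lemma cx_vanish (hd2 : 2 ≤ d) {w : Fin n → ℂ} (hw : Kcx b w) (j₀ : Fin n)
    (hsupp : ∀ k, w k ≠ 0 → (Gr b).connectedComponentMk k = (Gr b).connectedComponentMk j₀)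
    (h0 : w j₀ = 0) : w = 0 := by
  have hre := real_vanish b hd hnorm hangles hd2 (kreal_re b hw) j₀
    (fun k hk => hsupp k (fun hw0 => hk (by rw [hw0]; simp))) (by rw [h0]; simp)
  have him := real_vanish b hd hnorm hangles hd2 (kreal_im b hw) j₀
    (fun k hk => hsupp k (fun hw0 => hk (by rw [hw0]; simp))) (by rw [h0]; simp)
  funext k
  exact Complex.ext (hre k) (him k)

/-- generator property for a connected component -/
def GenProp (c : (Gr b).ConnectedComponent) (u : Fin n → ℝ) : Prop :=
  Kreal b u ∧ (∀ k, 0 ≤ u k) ∧ (∀ k, (Gr b).connectedComponentMk k = c → 0 < u k)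
    ∧ (∀ k, (Gr b).connectedComponentMk k ≠ c → u k = 0)

lemma exists_gen_aux (hd2 : 2 ≤ d) (c : (Gr b).ConnectedComponent) (r : Fin n → ℝ)
    (hr : Kreal b r) (k₀ : Fin n) (h0 : r k₀ ≠ 0)
    (hc : ∀ k, r k ≠ 0 → (Gr b).connectedComponentMk k = c) :
    ∃ u, GenProp b c u := by
  refine ⟨fun k => |r k|, kreal_abs b hd hnorm hangles hr, fun k => abs_nonneg _, ?_, ?_⟩
  · intro k hk
    have hk₀ : (Gr b).connectedComponentMk k₀ = c := hc k₀ h0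
    have hreach : (Gr b).Reachable k₀ k :=
      SimpleGraph.ConnectedComponent.exact (hk₀.trans hk.symm)
    exact pos_reachable b hd hnorm hangles hd2 (kreal_abs b hd hnorm hangles hr)
      (fun l => abs_nonneg _) (abs_pos.2 h0) hreach
  · intro k hk
    by_contra habs
    have : r k ≠ 0 := fun h => habs (by simp [h])
    exact hk (hc k this)

lemma exists_gen (hd2 : 2 ≤ d) (c : (Gr b).ConnectedComponent) (v : Fin n → ℂ)
    (hv : Kcx b v) (hv0 : v ≠ 0)
    (hsupp : ∀ k, v k ≠ 0 → (Gr b).connectedComponentMk k = c) :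
    ∃ u, GenProp b c u := by
  obtain ⟨k₀, hk₀⟩ := Function.ne_iff.1 hv0
  by_cases hre : (v k₀).re ≠ 0
  · exact exists_gen_aux b hd hnorm hangles hd2 c _ (kreal_re b hv) k₀ hre
      (fun k hk => hsupp k (fun h => hk (by rw [h]; simp)))
  · push_neg at hre
    have him : (v k₀).im ≠ 0 := by
      intro h
      exact hk₀ (Complex.ext hre (by simpa using h))
    exact exists_gen_aux b hd hnorm hangles hd2 c _ (kreal_im b hv) k₀ him
      (fun k hk => hsupp k (fun h => hk (by rw [h]; simp)))

lemma gen_unique (hd2 : 2 ≤ d) (c : (Gr b).ConnectedComponent) (u : Fin n → ℝ)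
    (hu : GenProp b c u) (v : Fin n → ℂ) (hv : Kcx b v)
    (hsupp : ∀ k, v k ≠ 0 → (Gr b).connectedComponentMk k = c) :
    ∃ z : ℂ, v = z • (fun k => ((u k : ℝ) : ℂ)) := by
  obtain ⟨j₀, hj₀⟩ := Quot.exists_rep c
  have hj₀' : (Gr b).connectedComponentMk j₀ = c := hj₀
  have huj₀ : 0 < u j₀ := hu.2.2.1 j₀ hj₀'
  set z : ℂ := v j₀ / (u j₀ : ℝ) with hz
  set w : Fin n → ℂ := fun k => v k - z * (u k : ℝ) with hw
  have hKu : Kcx b (fun k => ((u k : ℝ) : ℂ)) := kcx_of_kreal b hu.1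
  have hKw : Kcx b w := by
    intro j
    rw [hw]
    simp only
    rw [Finset.sum_sub_distrib, ← Finset.mul_sum, ← hv j, ← hKu j]
    ring
  have hw0 : w j₀ = 0 := by
    rw [hw]
    simp only
    rw [hz, div_mul_cancel₀]
    · ring
    · exact_mod_cast ne_of_gt huj₀
  have hwsupp : ∀ k, w k ≠ 0 →
      (Gr b).connectedComponentMk k = (Gr b).connectedComponentMk j₀ := by
    intro k hk
    rw [hj₀']
    by_cases hvk : v k ≠ 0
    · exact hsupp k hvk
    · push_neg at hvk
      have huk : (u k : ℂ) ≠ 0 := by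
        intro h
        apply hk
        rw [hw]; simp only; rw [hvk, h, mul_zero, sub_zero]
      by_contra hc2
      have := hu.2.2.2 k hc2
      rw [this] at huk
      simp at huk
  have := cx_vanish b hd hnorm hangles hd2 hKw j₀ hwsupp hw0
  refine ⟨z, funext fun k => ?_⟩
  have hk := congrFun this k
  rw [hw] at hk
  simp only at hk
  have : v k - z * (u k : ℝ) = 0 := hk
  simp only [Pi.smul_apply, smul_eq_mul]
  linear_combination this

/-- restriction of a vector to a component -/
noncomputable def restr (v : Fin n → ℂ) (c : (Gr b).ConnectedComponent) : Fin n → ℂ :=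
  fun k => if (Gr b).connectedComponentMk k = c then v k else 0

omit hd hnorm hangles in
lemma adj_mk_eq {j k : Fin n} (h : Adj b j k) :
    (Gr b).connectedComponentMk j = (Gr b).connectedComponentMk k :=
  SimpleGraph.ConnectedComponent.sound (SimpleGraph.Adj.reachable (show (Gr b).Adj j k from h))

omit hd hnorm hangles in
lemma Kcx_restr {v : Fin n → ℂ} (hv : Kcx b v) (c : (Gr b).ConnectedComponent) :
    Kcx b (restr b v c) := by
  intro j
  by_cases hj : (Gr b).connectedComponentMk j = c
  · have h1 : restr b v c j = v j := by rw [restr, if_pos hj]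
    rw [h1]
    rw [Finset.sum_congr rfl fun k hk => show restr b v c k = v k by
      rw [restr, if_pos (((adj_mk_eq b ((mem_N b).1 hk)).symm).trans hj)]]
    exact hv j
  · have h1 : restr b v c j = 0 := by rw [restr, if_neg hj]
    rw [h1, mul_zero]
    rw [Finset.sum_congr rfl fun k hk => show restr b v c k = 0 by
      rw [restr, if_neg (fun h => hj (((adj_mk_eq b ((mem_N b).1 hk)).trans h)))]]
    simp

omit hd hnorm hangles in
lemma sum_restr (v : Fin n → ℂ) : ∑ c, restr b v c = v := by
  funext k
  rw [Finset.sum_apply]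
  unfold restr
  rw [Finset.sum_congr rfl fun c _ => show
      (if (Gr b).connectedComponentMk k = c then v k else 0)
        = (if (Gr b).connectedComponentMk k = c then v k else 0) from rfl]
  rw [Finset.sum_ite_eq Finset.univ ((Gr b).connectedComponentMk k) (fun _ => v k)]
  simp

/-- components that carry a kernel generator -/
def PC (c : (Gr b).ConnectedComponent) : Prop := ∃ u, GenProp b c u

noncomputable def F (c : (Gr b).ConnectedComponent) : Fin n → ℂ :=
  if h : PC b c then (fun k => ((Classical.choose h k : ℝ) : ℂ)) else 0

noncomputable def Sset : Finset ((Gr b).ConnectedComponent) :=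
  Finset.univ.filter (PC b)

lemma card_Sset (hd2 : 2 ≤ d) (hn : n = d * (d + 1)) : d + 1 ≤ (Sset b).card := by
  classical
  have hker : d + 1 ≤ Module.finrank ℂ (LinearMap.ker (Lmap b)) :=
    finrank_ker_Lmap b hnorm hd hn
  set T : Finset (Fin n → ℂ) := (Sset b).image (F b) with hT
  have hle : LinearMap.ker (Lmap b) ≤ Submodule.span ℂ (T : Set (Fin n → ℂ)) := by
    intro v hv
    have hKv : Kcx b v := (ker_iff_Kcx b hd hnorm hangles v).1 hv
    rw [← sum_restr b v]
    refine Submodule.sum_mem _ fun c _ => ?_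
    by_cases h0 : restr b v c = 0
    · rw [h0]; exact Submodule.zero_mem _
    · have hsupp : ∀ k, restr b v c k ≠ 0 → (Gr b).connectedComponentMk k = c := by
        intro k hk
        by_contra hc2
        exact hk (by rw [restr, if_neg hc2])
      have hPC : PC b c := exists_gen b hd hnorm hangles hd2 c _ (Kcx_restr b hKv c) h0 hsupp
      obtain ⟨z, hz⟩ := gen_unique b hd hnorm hangles hd2 c (Classical.choose hPC)
        (Classical.choose_spec hPC) _ (Kcx_restr b hKv c) hsupp
      rw [hz]
      have hFc : F b c = (fun k => ((Classical.choose hPC k : ℝ) : ℂ)) := dif_pos hPC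
      rw [← hFc]
      refine Submodule.smul_mem _ _ (Submodule.subset_span ?_)
      rw [hT]
      simp only [Finset.coe_image, Set.mem_image, Finset.mem_coe]
      exact ⟨c, Finset.mem_filter.2 ⟨Finset.mem_univ c, hPC⟩, rfl⟩
  calc d + 1 ≤ Module.finrank ℂ (LinearMap.ker (Lmap b)) := hker
    _ ≤ Module.finrank ℂ (Submodule.span ℂ (T : Set (Fin n → ℂ))) :=
        Submodule.finrank_mono hle
    _ ≤ T.card := finrank_span_finset_le_card T
    _ ≤ (Sset b).card := Finset.card_image_le

noncomputable def suppF (c : (Gr b).ConnectedComponent) : Finset (Fin n) :=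
  Finset.univ.filter (fun k => (Gr b).connectedComponentMk k = c)

omit hd hnorm hangles in
lemma sum_suppF : ∑ c, (suppF b c).card = n := by
  have := Finset.card_eq_sum_card_fiberwise
    (f := fun k : Fin n => (Gr b).connectedComponentMk k)
    (s := Finset.univ) (t := Finset.univ) (fun x _ => Finset.mem_univ _)
  rw [Finset.card_univ, Fintype.card_fin] at this
  have h2 : ∑ c, (suppF b c).card
      = ∑ c : (Gr b).ConnectedComponent,
        (Finset.univ.filter (fun a : Fin n => (Gr b).connectedComponentMk a = c)).card :=
    Finset.sum_congr rfl fun c _ => rfl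
  rw [h2]
  exact this.symm

omit hd hnorm hangles in
lemma N_subset_suppF {j : Fin n} {c : (Gr b).ConnectedComponent}
    (hj : j ∈ suppF b c) : N b j ⊆ (suppF b c).erase j := by
  intro k hk
  have hadj : Adj b j k := (mem_N b).1 hk
  refine Finset.mem_erase.2 ⟨hadj.1, ?_⟩
  rw [suppF, Finset.mem_filter]
  exact ⟨Finset.mem_univ _, ((adj_mk_eq b hadj).symm).trans
    ((Finset.mem_filter.1 hj).2)⟩

lemma card_suppF_ge (hd2 : 2 ≤ d) {c : (Gr b).ConnectedComponent} (hc : c ∈ Sset b) :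
    d ≤ (suppF b c).card := by
  have hPC : PC b c := (Finset.mem_filter.1 hc).2
  obtain ⟨u, hu⟩ := hPC
  obtain ⟨j₀, hj₀⟩ := Quot.exists_rep c
  have hj₀' : (Gr b).connectedComponentMk j₀ = c := hj₀
  have hj₀m : j₀ ∈ suppF b c := Finset.mem_filter.2 ⟨Finset.mem_univ _, hj₀'⟩
  obtain ⟨js, hjs, hmax⟩ := Finset.exists_max_image (suppF b c) u ⟨j₀, hj₀m⟩
  have hjs' : (Gr b).connectedComponentMk js = c := (Finset.mem_filter.1 hjs).2
  have hM : 0 < u js := hu.2.2.1 js hjs'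
  have hNsub := N_subset_suppF b hjs
  have heq : ((d:ℝ) - 1) * u js = ∑ k ∈ N b js, u k := hu.1 js
  have hsum_le : ∑ k ∈ N b js, u k ≤ (N b js).card • u js :=
    Finset.sum_le_card_nsmul _ _ _ (fun k hk =>
      hmax k (Finset.mem_of_mem_erase (hNsub hk)))
  rw [nsmul_eq_mul] at hsum_le
  have hle : ((d:ℝ) - 1) ≤ (N b js).card :=
    le_of_mul_le_mul_right (by rw [heq]; exact hsum_le) hM
  have hle2 : d - 1 ≤ (N b js).card := by
    have : ((d - 1 : ℕ) : ℝ) ≤ ((N b js).card : ℝ) := by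
      rw [Nat.cast_sub hd]; exact_mod_cast hle
    exact_mod_cast this
  have hcard : (N b js).card ≤ (suppF b c).card - 1 := by
    calc (N b js).card ≤ ((suppF b c).erase js).card := Finset.card_le_card hNsub
      _ = (suppF b c).card - 1 := Finset.card_erase_of_mem hjs
  have hpos : 1 ≤ (suppF b c).card := Finset.card_pos.2 ⟨j₀, hj₀m⟩
  omega

lemma main_deg (hd2 : 2 ≤ d) (hn : n = d * (d + 1)) (j : Fin n) :
    (N b j).card = d - 1 := by
  classical
  set cj := (Gr b).connectedComponentMk j with hcj
  have hjm : j ∈ suppF b cj := Finset.mem_filter.2 ⟨Finset.mem_univ _, rfl⟩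
  have hS := card_Sset b hd hnorm hangles hd2 hn
  have hsum := sum_suppF b
  have hP2 : 1 ≤ d * (d + 1) := Nat.mul_pos (by omega) (by omega)
  -- the component of j carries a generator
  have hcjS : cj ∈ Sset b := by
    by_contra hc
    have hsub : Sset b ⊆ Finset.univ.erase cj := fun c hcS =>
      Finset.mem_erase.2 ⟨fun h => hc (h ▸ hcS), Finset.mem_univ _⟩
    have h1 : d * (Sset b).card ≤ ∑ c ∈ Sset b, (suppF b c).card := by
      have := Finset.card_nsmul_le_sum (Sset b) (fun c => (suppF b c).card) d
        (fun c hcS => card_suppF_ge b hd hnorm hangles hd2 hcS)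
      rw [smul_eq_mul, mul_comm] at this
      exact this
    have h2 : ∑ c ∈ Sset b, (suppF b c).card
        ≤ ∑ c ∈ Finset.univ.erase cj, (suppF b c).card :=
      Finset.sum_le_sum_of_subset hsub
    have h3 : (suppF b cj).card + ∑ c ∈ Finset.univ.erase cj, (suppF b c).card = n := by
      have h3' := Finset.add_sum_erase Finset.univ (fun c => (suppF b c).card)
        (Finset.mem_univ cj)
      exact h3'.trans hsum
    have h4 : d * (d + 1) ≤ d * (Sset b).card := Nat.mul_le_mul_left d hS
    have h5 : 1 ≤ (suppF b cj).card := Finset.card_pos.2 ⟨j, hjm⟩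
    generalize hPg : d * (d + 1) = P at h4 hn hP2
    generalize hQg : d * (Sset b).card = Q at h1 h4
    omega
  have hge := card_suppF_ge b hd hnorm hangles hd2 hcjS
  -- the component of j has exactly d vertices
  have hcard : (suppF b cj).card = d := by
    have h0 : (suppF b cj).card + ∑ c ∈ (Sset b).erase cj, (suppF b c).card
        = ∑ c ∈ Sset b, (suppF b c).card :=
      Finset.add_sum_erase (Sset b) (fun c => (suppF b c).card) hcjS
    have h1 : d * ((Sset b).card - 1) ≤ ∑ c ∈ (Sset b).erase cj, (suppF b c).card := by
      have := Finset.card_nsmul_le_sum ((Sset b).erase cj) (fun c => (suppF b c).card) d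
        (fun c hcS => card_suppF_ge b hd hnorm hangles hd2 (Finset.mem_of_mem_erase hcS))
      rw [smul_eq_mul, mul_comm, Finset.card_erase_of_mem hcjS] at this
      exact this
    have h2 : ∑ c ∈ Sset b, (suppF b c).card ≤ n :=
      le_trans (Finset.sum_le_sum_of_subset (Finset.subset_univ _)) (le_of_eq hsum)
    have h3 : d * d ≤ d * ((Sset b).card - 1) := Nat.mul_le_mul_left d (by omega)
    have hn' : n = d * d + d := by rw [hn]; ring
    generalize hPg : d * ((Sset b).card - 1) = P at h1 h3
    generalize hDg : d * d = D at h3 hn'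
    omega
  have hPC : PC b cj := (Finset.mem_filter.1 hcjS).2
  set u := Classical.choose hPC with hu'
  have hu : GenProp b cj u := Classical.choose_spec hPC
  obtain ⟨js, hjs, hmax⟩ := Finset.exists_max_image (suppF b cj) u ⟨j, hjm⟩
  have hM : 0 < u js := hu.2.2.1 js (Finset.mem_filter.1 hjs).2
  have hNsub := N_subset_suppF b hjs
  have hcardN : (N b js).card ≤ d - 1 := by
    calc (N b js).card ≤ ((suppF b cj).erase js).card := Finset.card_le_card hNsub
      _ = d - 1 := by rw [Finset.card_erase_of_mem hjs, hcard]
  have heq : ((d:ℝ) - 1) * u js = ∑ k ∈ N b js, u k := hu.1 js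
  have hcast : ((d - 1 : ℕ) : ℝ) = (d:ℝ) - 1 := by
    rw [Nat.cast_sub hd, Nat.cast_one]
  have hsum_le : ∑ k ∈ N b js, u k ≤ ((N b js).card : ℝ) * u js := by
    have := Finset.sum_le_card_nsmul (N b js) u (u js)
      (fun k hk => hmax k (Finset.mem_of_mem_erase (hNsub hk)))
    rwa [nsmul_eq_mul] at this
  have hCge : ((d:ℝ) - 1) ≤ ((N b js).card : ℝ) :=
    le_of_mul_le_mul_right (by rw [heq]; exact hsum_le) hM
  have hCle : ((N b js).card : ℝ) ≤ (d:ℝ) - 1 := by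
    rw [← hcast]; exact_mod_cast hcardN
  have hCeq : ((N b js).card : ℝ) = (d:ℝ) - 1 := le_antisymm hCle hCge
  have hcN : (N b js).card = d - 1 := by
    have : ((N b js).card : ℝ) = ((d - 1 : ℕ) : ℝ) := by rw [hCeq, hcast]
    exact_mod_cast this
  -- all neighbours of the maximal vertex attain the maximum
  have hall : ∀ k ∈ N b js, u k = u js := by
    intro k hk
    by_contra hne
    have hlt : u k < u js :=
      lt_of_le_of_ne (hmax k (Finset.mem_of_mem_erase (hNsub hk))) hne
    have hlt2 : ∑ l ∈ N b js, u l < ∑ l ∈ N b js, (fun _ => u js) l :=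
      Finset.sum_lt_sum (fun l hl => hmax l (Finset.mem_of_mem_erase (hNsub hl)))
        ⟨k, hk, hlt⟩
    rw [Finset.sum_const, nsmul_eq_mul, hCeq] at hlt2
    rw [← heq] at hlt2
    exact lt_irrefl _ hlt2
  have hNeq : N b js = (suppF b cj).erase js := by
    refine Finset.eq_of_subset_of_card_le hNsub ?_
    rw [Finset.card_erase_of_mem hjs, hcard, hcN]
  have hconst : ∀ k ∈ suppF b cj, u k = u js := by
    intro k hk
    by_cases hkj : k = js
    · rw [hkj]
    · have : k ∈ (suppF b cj).erase js := Finset.mem_erase.2 ⟨hkj, hk⟩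
      rw [← hNeq] at this
      exact hall k this
  -- conclude at the original vertex j
  have hNj_sub : N b j ⊆ (suppF b cj).erase j := N_subset_suppF b hjm
  have heqj : ((d:ℝ) - 1) * u j = ∑ k ∈ N b j, u k := hu.1 j
  have huj : u j = u js := hconst j hjm
  have hsumj : ∑ k ∈ N b j, u k = ((N b j).card : ℝ) * u js := by
    rw [Finset.sum_congr rfl (fun k hk =>
      hconst k (Finset.mem_of_mem_erase (hNj_sub hk)))]
    rw [Finset.sum_const, nsmul_eq_mul]
  rw [huj, hsumj] at heqj
  have : ((d:ℝ) - 1) = ((N b j).card : ℝ) := mul_right_cancel₀ (ne_of_gt hM) heqj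
  have : ((d - 1 : ℕ) : ℝ) = ((N b j).card : ℝ) := by rw [hcast, this]
  exact_mod_cast this.symm

end WithHyps

end OrthAux

/-- Let `d ≥ 1`, `n = d(d+1)`, and let `b 1, …, b n` be unit vectors in `ℂ^d`
such that for every `j ≠ k`, `|⟨b j, b k⟩|²` equals either `0` or `1/d`.  Then for every index
`j`, the number of indices `k ≠ j` with `⟨b j, b k⟩ = 0` is exactly `d − 1`: the orthogonality
graph is `(d−1)`-regular. -/
theorem orthogonality_graph_regular
    (d n : ℕ) (hd : 1 ≤ d) (hn : n = d * (d + 1))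
    (b : Fin n → EuclideanSpace ℂ (Fin d))
    (hnorm : ∀ j, ‖b j‖ = 1)
    (hangles : ∀ j k, j ≠ k →
      ‖(inner ℂ (b j) (b k) : ℂ)‖ ^ 2 = 0 ∨ ‖(inner ℂ (b j) (b k) : ℂ)‖ ^ 2 = 1 / d) :
    ∀ j, {k | k ≠ j ∧ (inner ℂ (b j) (b k) : ℂ) = 0}.ncard = d - 1 := by
  intro j
  have hset : {k | k ≠ j ∧ (inner ℂ (b j) (b k) : ℂ) = 0} = ↑(OrthAux.N b j) := by
    ext k
    simp [OrthAux.N, OrthAux.Adj, OrthAux.q]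
  rw [hset, Set.ncard_coe_finset]
  by_cases hd2 : 2 ≤ d
  · exact OrthAux.main_deg b hd hnorm hangles hd2 hn j
  · have hd1 : d = 1 := by omega
    subst hd1
    have hempty : OrthAux.N b j = ∅ := by
      rw [Finset.eq_empty_iff_forall_notMem]
      intro k hk
      obtain ⟨hkj, hq⟩ := (OrthAux.mem_N b).1 hk
      have hj1 := OrthAux.sum_self b hnorm j
      have hk1 := OrthAux.sum_self b hnorm k
      rw [Fin.sum_univ_one] at hj1 hk1
      rw [OrthAux.q_apply, Fin.sum_univ_one] at hq
      rcases mul_eq_zero.1 hq with h | h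
      · rw [h, zero_mul] at hj1; exact zero_ne_one hj1
      · rw [h, mul_zero] at hk1; exact zero_ne_one hk1
    rw [hempty]
    simp
end

section
/- Let d ≥ 1, n = d(d+1), and let b_1, …, b_n be unit vectors in ℂ^d such that for every j ≠ k, |⟨b_j, b_k⟩|² equals either 0 or 1/d. Then the number of ordered triples (j, k, l) of pairwise distinct indices with ⟨b_j, b_k⟩ = ⟨b_k, b_l⟩ = ⟨b_l, b_j⟩ = 0 equals (d² − 1)·d·(d − 2). -/
open scoped ComplexConjugate

open Finset
open scoped Classical

namespace MUBcomb

variable {N : ℕ}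

noncomputable def Nf (adj : Fin N → Fin N → Prop) (j : Fin N) : Finset (Fin N) :=
  univ.filter (fun k => adj j k)

noncomputable def comp (adj : Fin N → Fin N → Prop) (j : Fin N) : Finset (Fin N) :=
  univ.filter (fun k => Relation.ReflTransGen adj j k)

lemma mem_Nf {adj : Fin N → Fin N → Prop} {j k : Fin N} : k ∈ Nf adj j ↔ adj j k := by
  simp [Nf]

lemma mem_comp {adj : Fin N → Fin N → Prop} {j k : Fin N} :
    k ∈ comp adj j ↔ Relation.ReflTransGen adj j k := by simp [comp]

lemma self_mem_comp {adj : Fin N → Fin N → Prop} (j : Fin N) : j ∈ comp adj j :=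
  mem_comp.2 Relation.ReflTransGen.refl

lemma comp_eq_of_reach {adj : Fin N → Fin N → Prop} (hsym : Symmetric adj) {j k : Fin N}
    (h : Relation.ReflTransGen adj j k) : comp adj j = comp adj k := by
  ext l
  simp only [mem_comp]
  constructor
  · intro hl
    exact (((@Relation.ReflTransGen.stdSymm _ adj ⟨fun _ _ h => hsym h⟩).symm _ _ h).trans hl)
  · intro hl
    exact h.trans hl

/-- The combinatorial "eigenspace" of the adjacency structure for eigenvalue `d-1`. -/
noncomputable def eigSp (d : ℕ) (adj : Fin N → Fin N → Prop) : Submodule ℝ (Fin N → ℝ) where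
  carrier := {x | ∀ j, ((d : ℝ) - 1) * x j = ∑ k ∈ Nf adj j, x k}
  add_mem' := by
    intro x y hx hy j
    simp only [Pi.add_apply, mul_add, hx j, hy j, Finset.sum_add_distrib]
  zero_mem' := by intro j; simp
  smul_mem' := by
    intro r x hx j
    simp only [Pi.smul_apply, smul_eq_mul]
    rw [← Finset.mul_sum, ← hx j]
    ring

lemma mem_eigSp {d : ℕ} {adj : Fin N → Fin N → Prop} {x : Fin N → ℝ} :
    x ∈ eigSp d adj ↔ ∀ j, ((d : ℝ) - 1) * x j = ∑ k ∈ Nf adj j, x k := Iff.rfl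

lemma spread_adj {d : ℕ} (hd : 2 ≤ d) {adj : Fin N → Fin N → Prop} (hsym : Symmetric adj)
    {x : Fin N → ℝ} (hx : x ∈ eigSp d adj) (hpos : ∀ l, 0 ≤ x l) {j k : Fin N}
    (hadj : adj j k) (hj : 0 < x j) : 0 < x k := by
  have h := (mem_eigSp.1 hx) k
  have hjk : j ∈ Nf adj k := mem_Nf.2 (hsym hadj)
  have hsum : x j ≤ ∑ l ∈ Nf adj k, x l :=
    Finset.single_le_sum (fun l _ => hpos l) hjk
  have h1 : 0 < ((d : ℝ) - 1) * x k := by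
    rw [h]; exact lt_of_lt_of_le hj hsum
  have hd1 : 0 < (d : ℝ) - 1 := by
    have : (2 : ℝ) ≤ (d : ℝ) := by exact_mod_cast hd
    linarith
  nlinarith [hpos k]


lemma spread_reach {d : ℕ} (hd : 2 ≤ d) {adj : Fin N → Fin N → Prop} (hsym : Symmetric adj)
    {x : Fin N → ℝ} (hx : x ∈ eigSp d adj) (hpos : ∀ l, 0 ≤ x l) {j k : Fin N}
    (hr : Relation.ReflTransGen adj j k) (hj : 0 < x j) : 0 < x k := by
  induction hr with
  | refl => exact hj
  | tail _ hadj ih => exact spread_adj hd hsym hx hpos hadj ih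

lemma restrict_mem {d : ℕ} {adj : Fin N → Fin N → Prop} (hsym : Symmetric adj)
    {x : Fin N → ℝ} (hx : x ∈ eigSp d adj) (j : Fin N) :
    (fun k => if k ∈ comp adj j then x k else 0) ∈ eigSp d adj := by
  intro l
  by_cases hl : l ∈ comp adj j
  · simp only [hl, if_true]
    rw [mem_eigSp.1 hx l]
    refine Finset.sum_congr rfl (fun k hk => ?_)
    have : k ∈ comp adj j := mem_comp.2 ((mem_comp.1 hl).tail (mem_Nf.1 hk))
    simp [this]
  · simp only [hl, if_false, mul_zero]
    symm
    refine Finset.sum_eq_zero (fun k hk => ?_)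
    have : k ∉ comp adj j := by
      intro hkc
      exact hl (mem_comp.2 ((mem_comp.1 hkc).tail (hsym (mem_Nf.1 hk))))
    simp [this]

/-- A component is *heavy* (relative to `j`) if it supports a nonzero eigenvector. -/
def Heavy (d : ℕ) (adj : Fin N → Fin N → Prop) (j : Fin N) : Prop :=
  ∃ x ∈ eigSp d adj, x ≠ 0 ∧ ∀ k, x k ≠ 0 → k ∈ comp adj j

lemma heavy_pos {d : ℕ} (hd : 2 ≤ d) {adj : Fin N → Fin N → Prop} (hsym : Symmetric adj)
    (habs : ∀ x ∈ eigSp d adj, (fun k => |x k|) ∈ eigSp d adj)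
    {r : Fin N} (hr : Heavy d adj r) :
    ∃ y ∈ eigSp d adj, (∀ l, 0 ≤ y l) ∧ ∀ k ∈ comp adj r, 0 < y k := by
  obtain ⟨x, hx, hxne, hsupp⟩ := hr
  obtain ⟨k0, hk0⟩ : ∃ k0, x k0 ≠ 0 := by
    by_contra h
    push_neg at h
    exact hxne (funext fun k => h k)
  have hk0c : k0 ∈ comp adj r := hsupp _ hk0
  refine ⟨fun k => |x k|, habs x hx, fun l => abs_nonneg _, fun k hk => ?_⟩
  have hreach : Relation.ReflTransGen adj k0 k :=
    ((@Relation.ReflTransGen.stdSymm _ adj ⟨fun _ _ h => hsym h⟩).symm _ _ (mem_comp.1 hk0c)).trans (mem_comp.1 hk)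
  exact spread_reach hd hsym (habs x hx) (fun l => abs_nonneg _) hreach (abs_pos.2 hk0)

lemma Nf_subset_comp_erase {adj : Fin N → Fin N → Prop} (hirr : ∀ j, ¬ adj j j)
    {r k : Fin N} (hk : k ∈ comp adj r) : Nf adj k ⊆ (comp adj r).erase k := by
  intro l hl
  have hadj := mem_Nf.1 hl
  refine Finset.mem_erase.2 ⟨?_, ?_⟩
  · rintro rfl; exact hirr _ hadj
  · exact mem_comp.2 ((mem_comp.1 hk).tail hadj)

lemma heavy_card {d : ℕ} (hd : 2 ≤ d) {adj : Fin N → Fin N → Prop} (hsym : Symmetric adj)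
    (hirr : ∀ j, ¬ adj j j)
    (habs : ∀ x ∈ eigSp d adj, (fun k => |x k|) ∈ eigSp d adj)
    {r : Fin N} (hr : Heavy d adj r) : d ≤ (comp adj r).card := by
  obtain ⟨y, hy, hynn, hypos⟩ := heavy_pos hd hsym habs hr
  obtain ⟨m, hm, hmax⟩ := Finset.exists_max_image (comp adj r) y ⟨r, self_mem_comp r⟩
  have heig := mem_eigSp.1 hy m
  have hsub : Nf adj m ⊆ (comp adj r).erase m := Nf_subset_comp_erase hirr hm
  have hbound : ∑ k ∈ Nf adj m, y k ≤ ((comp adj r).card - 1 : ℕ) * y m := by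
    calc ∑ k ∈ Nf adj m, y k ≤ ∑ k ∈ (comp adj r).erase m, y k :=
          Finset.sum_le_sum_of_subset_of_nonneg hsub (fun l _ _ => hynn l)
      _ ≤ ((comp adj r).erase m).card • y m :=
          Finset.sum_le_card_nsmul _ _ _ (fun l hl => hmax l (Finset.mem_of_mem_erase hl))
      _ = ((comp adj r).card - 1 : ℕ) * y m := by
          rw [Finset.card_erase_of_mem hm, nsmul_eq_mul]
  have hym : 0 < y m := hypos m hm
  have h1 : ((d : ℝ) - 1) * y m ≤ ((comp adj r).card - 1 : ℕ) * y m := by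
    rw [heig]; exact hbound
  have h2 : (d : ℝ) - 1 ≤ ((comp adj r).card - 1 : ℕ) := le_of_mul_le_mul_right h1 hym
  have hcpos : 1 ≤ (comp adj r).card := Finset.card_pos.2 ⟨m, hm⟩
  have : (d : ℝ) ≤ ((comp adj r).card : ℝ) := by
    have := Nat.cast_sub hcpos (R := ℝ)
    rw [this] at h2
    push_cast at h2 ⊢
    linarith
  exact_mod_cast this


theorem structure_thm
    (d : ℕ) (hd : 2 ≤ d) (hN : N = d * (d + 1))
    (adj : Fin N → Fin N → Prop) (hsym : Symmetric adj) (hirr : ∀ j, ¬ adj j j)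
    (habs : ∀ x ∈ eigSp d adj, (fun k => |x k|) ∈ eigSp d adj)
    (W : Submodule ℝ (Fin N → ℝ)) (hW : W ≤ eigSp d adj)
    (hWdim : d + 1 ≤ Module.finrank ℝ W) :
    ∀ j : Fin N, Nf adj j = (comp adj j).erase j ∧ (comp adj j).card = d := by
  classical
  set H : Finset (Fin N) :=
    univ.filter (fun r => Heavy d adj r ∧ ∀ k ∈ comp adj r, r ≤ k) with hHdef
  have hmemH : ∀ {r}, r ∈ H ↔ Heavy d adj r ∧ ∀ k ∈ comp adj r, r ≤ k := by
    intro r; simp [hHdef]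
  -- the evaluation map on representatives
  set ev : (eigSp d adj) →ₗ[ℝ] (↥H → ℝ) :=
    LinearMap.pi (fun r : ↥H => (LinearMap.proj (r : Fin N)).comp (eigSp d adj).subtype) with hev
  have hinj : Function.Injective ev := by
    rw [injective_iff_map_eq_zero]
    intro x hx0
    ext j
    by_contra hxj
    have hxj : (x : Fin N → ℝ) j ≠ 0 := hxj
    set z : Fin N → ℝ := fun k => if k ∈ comp adj j then (x : Fin N → ℝ) k else 0 with hzdef
    have hz : z ∈ eigSp d adj := restrict_mem hsym x.2 j
    have hzj : z j = (x : Fin N → ℝ) j := by simp [hzdef, self_mem_comp j]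
    have hzne : z ≠ 0 := by
      intro h0
      exact hxj (by rw [← hzj, h0]; rfl)
    have hzsupp : ∀ k, z k ≠ 0 → k ∈ comp adj j := by
      intro k hk
      by_contra hkc
      exact hk (by simp [hzdef, hkc])
    set m : Fin N := (comp adj j).min' ⟨j, self_mem_comp j⟩ with hmdef
    have hm : m ∈ comp adj j := Finset.min'_mem _ _
    have hcompeq : comp adj j = comp adj m := comp_eq_of_reach hsym (mem_comp.1 hm)
    have hmH : m ∈ H := by
      refine hmemH.2 ⟨⟨z, hz, hzne, fun k hk => hcompeq ▸ hzsupp k hk⟩, ?_⟩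
      intro k hk
      rw [← hcompeq] at hk
      exact Finset.min'_le _ _ hk
    have hxm : (x : Fin N → ℝ) m = 0 := congrFun hx0 ⟨m, hmH⟩
    have habsz := habs z hz
    have hzjpos : 0 < |z j| := abs_pos.2 (by rw [hzj]; exact hxj)
    have hzm : 0 < |z m| :=
      spread_reach hd hsym habsz (fun l => abs_nonneg _) (mem_comp.1 hm) hzjpos
    have : z m = (x : Fin N → ℝ) m := by simp [hzdef, hm]
    rw [this, hxm] at hzm
    simp at hzm
  have hHcard : d + 1 ≤ H.card := by
    have h1 : Module.finrank ℝ W ≤ Module.finrank ℝ (eigSp d adj) :=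
      Submodule.finrank_mono hW
    have h2 : Module.finrank ℝ (eigSp d adj) ≤ Module.finrank ℝ (↥H → ℝ) :=
      LinearMap.finrank_le_finrank_of_injective hinj
    have h3 : Module.finrank ℝ (↥H → ℝ) = H.card := by
      rw [Module.finrank_pi]; exact Fintype.card_coe _
    omega
  have hdisj : ∀ r ∈ H, ∀ r' ∈ H, r ≠ r' → Disjoint (comp adj r) (comp adj r') := by
    intro r hr r' hr' hne
    rw [Finset.disjoint_left]
    intro k hk hk'
    have e1 : comp adj r = comp adj k := comp_eq_of_reach hsym (mem_comp.1 hk)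
    have e2 : comp adj r' = comp adj k := comp_eq_of_reach hsym (mem_comp.1 hk')
    have hr'in : r' ∈ comp adj r := by rw [e1, ← e2]; exact self_mem_comp r'
    have hrin : r ∈ comp adj r' := by rw [e2, ← e1]; exact self_mem_comp r
    exact hne (le_antisymm ((hmemH.1 hr).2 r' hr'in) ((hmemH.1 hr').2 r hrin))
  have hsumle : ∑ r ∈ H, (comp adj r).card ≤ N := by
    rw [← Finset.card_biUnion hdisj]
    simpa using Finset.card_le_card (Finset.subset_univ (H.biUnion (comp adj)))
  have hterm : ∀ r ∈ H, d ≤ (comp adj r).card := fun r hr =>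
    heavy_card hd hsym hirr habs (hmemH.1 hr).1
  have hsumge : H.card * d ≤ ∑ r ∈ H, (comp adj r).card := by
    calc H.card * d = ∑ _r ∈ H, d := by rw [Finset.sum_const, smul_eq_mul]
      _ ≤ ∑ r ∈ H, (comp adj r).card := Finset.sum_le_sum hterm
  have hHeq : H.card = d + 1 := by
    have : H.card * d ≤ d * (d + 1) := le_trans hsumge (hN ▸ hsumle)
    have hd0 : 0 < d := by omega
    nlinarith [hHcard]
  have hsumeq : ∑ r ∈ H, (comp adj r).card = N := by
    have : d * (d+1) ≤ ∑ r ∈ H, (comp adj r).card := by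
      calc d * (d+1) = H.card * d := by rw [hHeq]; ring
        _ ≤ _ := hsumge
    omega
  have hcompcard : ∀ r ∈ H, (comp adj r).card = d := by
    have heq : ∑ _r ∈ H, d = ∑ r ∈ H, (comp adj r).card := by
      rw [Finset.sum_const, smul_eq_mul, hHeq, hsumeq, hN]; ring
    intro r hr
    exact ((Finset.sum_eq_sum_iff_of_le hterm).1 heq r hr).symm
  have hcover : H.biUnion (comp adj) = univ := by
    apply Finset.eq_univ_of_card
    rw [Finset.card_biUnion hdisj, hsumeq]
    simp
  -- completeness of every heavy component
  have hcomplete : ∀ r ∈ H, ∀ k ∈ comp adj r, Nf adj k = (comp adj r).erase k := by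
    intro r hr
    obtain ⟨y, hy, hynn, hypos⟩ := heavy_pos hd hsym habs (hmemH.1 hr).1
    set c := comp adj r with hcdef
    have hccard : c.card = d := hcompcard r hr
    have hNfsub : ∀ k ∈ c, Nf adj k ⊆ c.erase k := fun k hk => Nf_subset_comp_erase hirr hk
    have hNfcard : ∀ k ∈ c, (Nf adj k).card ≤ d - 1 := by
      intro k hk
      have := Finset.card_le_card (hNfsub k hk)
      rwa [Finset.card_erase_of_mem hk, hccard] at this
    have hfilter1 : ∀ j ∈ c, c.filter (fun k => adj j k) = Nf adj j := by
      intro j hj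
      ext l
      simp only [Finset.mem_filter, mem_Nf]
      exact ⟨fun h => h.2, fun h =>
        ⟨Finset.mem_of_mem_erase (hNfsub j hj (mem_Nf.2 h)), h⟩⟩
    have hfilter2 : ∀ k ∈ c, c.filter (fun j => adj j k) = Nf adj k := by
      intro k hk
      ext l
      simp only [Finset.mem_filter, mem_Nf]
      constructor
      · intro h; exact hsym h.2
      · intro h
        exact ⟨Finset.mem_of_mem_erase (hNfsub k hk (mem_Nf.2 h)), hsym h⟩
    have hident : ∑ k ∈ c, ((d : ℝ) - 1) * y k
        = ∑ k ∈ c, ((Nf adj k).card : ℝ) * y k := by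
      calc ∑ k ∈ c, ((d : ℝ) - 1) * y k = ∑ j ∈ c, ∑ k ∈ Nf adj j, y k :=
            Finset.sum_congr rfl (fun j _ => mem_eigSp.1 hy j)
        _ = ∑ j ∈ c, ∑ k ∈ c, (if adj j k then y k else 0) := by
            refine Finset.sum_congr rfl (fun j hj => ?_)
            rw [← hfilter1 j hj, Finset.sum_filter]
        _ = ∑ k ∈ c, ∑ j ∈ c, (if adj j k then y k else 0) := Finset.sum_comm
        _ = ∑ k ∈ c, ((Nf adj k).card : ℝ) * y k := by
            refine Finset.sum_congr rfl (fun k hk => ?_)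
            rw [← Finset.sum_filter, hfilter2 k hk, Finset.sum_const, nsmul_eq_mul]
    have hzero : ∑ k ∈ c, (((d : ℝ) - 1) - ((Nf adj k).card : ℝ)) * y k = 0 := by
      have := sub_eq_zero.2 hident
      rw [← Finset.sum_sub_distrib] at this
      rw [← this]
      refine Finset.sum_congr rfl (fun k _ => ?_)
      ring
    have hnonneg : ∀ k ∈ c, 0 ≤ (((d : ℝ) - 1) - ((Nf adj k).card : ℝ)) * y k := by
      intro k hk
      apply mul_nonneg _ (hynn k)
      have h1 : ((Nf adj k).card : ℝ) ≤ ((d - 1 : ℕ) : ℝ) := by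
        exact_mod_cast hNfcard k hk
      have h2 : ((d - 1 : ℕ) : ℝ) = (d : ℝ) - 1 := by
        rw [Nat.cast_sub (by omega)]; simp
      linarith
    have hallzero := (Finset.sum_eq_zero_iff_of_nonneg hnonneg).1 hzero
    intro k hk
    have hterm0 := hallzero k hk
    have hypk : y k ≠ 0 := ne_of_gt (hypos k hk)
    have hcoef : ((Nf adj k).card : ℝ) = (d : ℝ) - 1 := by
      rcases mul_eq_zero.1 hterm0 with h | h
      · linarith [sub_eq_zero.1 h]
      · exact absurd h hypk
    have hcardNf : (Nf adj k).card = d - 1 := by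
      have : ((Nf adj k).card : ℝ) = ((d - 1 : ℕ) : ℝ) := by
        rw [hcoef, Nat.cast_sub (by omega)]; simp
      exact_mod_cast this
    refine Finset.eq_of_subset_of_card_le (hNfsub k hk) ?_
    rw [Finset.card_erase_of_mem hk, hccard, hcardNf]
  -- conclusion
  intro j
  have hj : j ∈ H.biUnion (comp adj) := by rw [hcover]; exact Finset.mem_univ j
  obtain ⟨r, hr, hjr⟩ := Finset.mem_biUnion.1 hj
  have hceq : comp adj r = comp adj j := comp_eq_of_reach hsym (mem_comp.1 hjr)
  constructor
  · rw [← hceq]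
    exact hcomplete r hr j hjr
  · rw [← hceq]
    exact hcompcard r hr

end MUBcomb


namespace MUBana

variable {d n : ℕ}

noncomputable def Pm (b : Fin n → EuclideanSpace ℂ (Fin d)) (j : Fin n) :
    Matrix (Fin d) (Fin d) ℂ :=
  Matrix.of fun a c => b j a * conj (b j c)

noncomputable def Qm (b : Fin n → EuclideanSpace ℂ (Fin d)) (j : Fin n) :
    Matrix (Fin d) (Fin d) ℂ :=
  Pm b j - ((d : ℂ))⁻¹ • 1

lemma inner_apply' (x y : EuclideanSpace ℂ (Fin d)) :
    (inner ℂ x y : ℂ) = ∑ i, conj (x i) * y i := by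
  rw [PiLp.inner_apply]; exact Finset.sum_congr rfl fun i _ => RCLike.inner_apply' _ _

lemma trace_Pm_mul (b : Fin n → EuclideanSpace ℂ (Fin d)) (j k : Fin n) :
    Matrix.trace (Pm b j * Pm b k)
      = (inner ℂ (b j) (b k) : ℂ) * (inner ℂ (b k) (b j) : ℂ) := by
  rw [inner_apply', inner_apply', Matrix.trace]
  simp only [Matrix.diag_apply, Matrix.mul_apply, Pm, Matrix.of_apply]
  rw [Finset.sum_comm, Finset.sum_mul_sum]
  exact Finset.sum_congr rfl fun c _ => Finset.sum_congr rfl fun a _ => by ring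

lemma trace_Pm (b : Fin n → EuclideanSpace ℂ (Fin d)) (j : Fin n) :
    Matrix.trace (Pm b j) = (inner ℂ (b j) (b j) : ℂ) := by
  rw [inner_apply', Matrix.trace]
  simp only [Matrix.diag_apply, Pm, Matrix.of_apply]
  exact Finset.sum_congr rfl fun a _ => by ring

noncomputable def tR (b : Fin n → EuclideanSpace ℂ (Fin d)) (j k : Fin n) : ℝ :=
  ‖(inner ℂ (b j) (b k) : ℂ)‖ ^ 2 - 1 / d

lemma trace_Qm_mul (b : Fin n → EuclideanSpace ℂ (Fin d)) (hd : 1 ≤ d)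
    (hnorm : ∀ j, ‖b j‖ = 1) (j k : Fin n) :
    Matrix.trace (Qm b j * Qm b k) = ((tR b j k : ℝ) : ℂ) := by
  have hdC : (d : ℂ) ≠ 0 := by
    exact Nat.cast_ne_zero.2 (by omega : d ≠ 0)
  have htr1 : ∀ l, Matrix.trace (Pm b l) = 1 := by
    intro l
    rw [trace_Pm, inner_self_eq_norm_sq_to_K, hnorm l]
    norm_num
  have hz : (inner ℂ (b j) (b k) : ℂ) * (inner ℂ (b k) (b j) : ℂ)
      = ((‖(inner ℂ (b j) (b k) : ℂ)‖ ^ 2 : ℝ) : ℂ) := by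
    have h1 : (inner ℂ (b k) (b j) : ℂ) = conj (inner ℂ (b j) (b k) : ℂ) := by
      rw [inner_conj_symm]
    rw [h1, Complex.mul_conj']
    push_cast
    ring
  unfold Qm
  rw [sub_mul, mul_sub, mul_sub]
  simp only [Matrix.trace_sub, Matrix.smul_mul, Matrix.mul_smul, Matrix.trace_smul,
    Matrix.one_mul, Matrix.mul_one, Matrix.trace_one, smul_eq_mul]
  rw [trace_Pm_mul, htr1 j, htr1 k, hz]
  unfold tR
  push_cast
  field_simp
  rw [Fintype.card_fin]; ring

noncomputable def Lm (b : Fin n → EuclideanSpace ℂ (Fin d)) :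
    (Fin n → ℝ) →ₗ[ℝ] Matrix (Fin d) (Fin d) ℂ where
  toFun x := ∑ j, x j • Qm b j
  map_add' x y := by
    simp only [Pi.add_apply, add_smul, Finset.sum_add_distrib]
  map_smul' r x := by
    simp only [Pi.smul_apply, smul_eq_mul, RingHom.id_apply, Finset.smul_sum, smul_smul]

lemma Qm_apply (b : Fin n → EuclideanSpace ℂ (Fin d)) (j : Fin n) (a c : Fin d) :
    Qm b j a c = b j a * conj (b j c) - (if a = c then ((d : ℂ))⁻¹ else 0) := by
  simp [Qm, Pm, Matrix.one_apply, Matrix.sub_apply, Matrix.smul_apply, smul_eq_mul, mul_ite]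

lemma Qm_conj (b : Fin n → EuclideanSpace ℂ (Fin d)) (j : Fin n) (a c : Fin d) :
    conj (Qm b j c a) = Qm b j a c := by
  rw [Qm_apply, Qm_apply]
  rw [map_sub, map_mul]
  simp only [RingHomCompTriple.comp_apply, RingHom.id_apply, Complex.conj_conj]
  congr 1
  · ring
  · rw [apply_ite conj]
    simp only [map_inv₀, Complex.conj_natCast, map_zero]
    rcases eq_or_ne a c with h | h
    · simp [h]
    · simp [h, Ne.symm h]

lemma Lm_conj (b : Fin n → EuclideanSpace ℂ (Fin d)) (x : Fin n → ℝ) (a c : Fin d) :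
    conj ((Lm b x) c a) = (Lm b x) a c := by
  show conj ((∑ j, x j • Qm b j) c a) = (∑ j, x j • Qm b j) a c
  simp only [Finset.sum_apply, Matrix.sum_apply, Matrix.smul_apply, map_sum]
  refine Finset.sum_congr rfl fun j _ => ?_
  rw [Complex.real_smul, Complex.real_smul, map_mul, Complex.conj_ofReal, Qm_conj]

noncomputable def qR (b : Fin n → EuclideanSpace ℂ (Fin d)) (x : Fin n → ℝ) : ℝ :=
  ∑ c, ∑ a, ‖(Lm b x) c a‖ ^ 2

noncomputable def qt (b : Fin n → EuclideanSpace ℂ (Fin d)) (x : Fin n → ℝ) : ℝ :=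
  ∑ j, ∑ k, tR b j k * (x j * x k)

lemma trace_sq_eq_qR (b : Fin n → EuclideanSpace ℂ (Fin d)) (x : Fin n → ℝ) :
    Matrix.trace (Lm b x * Lm b x) = ((qR b x : ℝ) : ℂ) := by
  rw [Matrix.trace, qR]
  push_cast
  simp only [Matrix.diag_apply, Matrix.mul_apply]
  refine Finset.sum_congr rfl fun c _ => Finset.sum_congr rfl fun a _ => ?_
  rw [← Lm_conj b x a c, Complex.mul_conj']

lemma trace_sq_eq_qt (b : Fin n → EuclideanSpace ℂ (Fin d)) (hd : 1 ≤ d)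
    (hnorm : ∀ j, ‖b j‖ = 1) (x : Fin n → ℝ) :
    Matrix.trace (Lm b x * Lm b x) = ((qt b x : ℝ) : ℂ) := by
  have hexp : Lm b x * Lm b x = ∑ j, ∑ k, (x j * x k) • (Qm b j * Qm b k) := by
    show (∑ j, x j • Qm b j) * (∑ k, x k • Qm b k) = _
    rw [Finset.sum_mul_sum]
    refine Finset.sum_congr rfl fun j _ => Finset.sum_congr rfl fun k _ => ?_
    rw [Matrix.smul_mul, Matrix.mul_smul, smul_smul]
  rw [hexp, Matrix.trace_sum]
  simp only [Matrix.trace_sum, Matrix.trace_smul]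
  rw [qt]
  push_cast
  refine Finset.sum_congr rfl fun j _ => ?_
  refine Finset.sum_congr rfl fun k _ => ?_
  rw [trace_Qm_mul b hd hnorm j k, Complex.real_smul]
  push_cast
  ring

lemma qt_eq_qR (b : Fin n → EuclideanSpace ℂ (Fin d)) (hd : 1 ≤ d)
    (hnorm : ∀ j, ‖b j‖ = 1) (x : Fin n → ℝ) : qt b x = qR b x := by
  have := (trace_sq_eq_qR b x).symm.trans (trace_sq_eq_qt b hd hnorm x)
  exact_mod_cast this.symm

lemma qR_nonneg (b : Fin n → EuclideanSpace ℂ (Fin d)) (x : Fin n → ℝ) : 0 ≤ qR b x :=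
  Finset.sum_nonneg fun c _ => Finset.sum_nonneg fun a _ => by positivity

lemma Lm_eq_zero_of_qR (b : Fin n → EuclideanSpace ℂ (Fin d)) {x : Fin n → ℝ}
    (h : qR b x = 0) : Lm b x = 0 := by
  have h1 := (Finset.sum_eq_zero_iff_of_nonneg
    (fun c (_ : c ∈ univ) => Finset.sum_nonneg fun a _ => by positivity)).1 h
  ext c a
  have h2 := (Finset.sum_eq_zero_iff_of_nonneg
    (fun a (_ : a ∈ univ) => by positivity)).1 (h1 c (Finset.mem_univ c)) a (Finset.mem_univ a)
  simpa using (pow_eq_zero_iff (n := 2) (by norm_num)).1 h2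

lemma trace_row (b : Fin n → EuclideanSpace ℂ (Fin d)) (hd : 1 ≤ d)
    (hnorm : ∀ j, ‖b j‖ = 1) (x : Fin n → ℝ) (j : Fin n) :
    Matrix.trace (Qm b j * Lm b x) = ((∑ k, tR b j k * x k : ℝ) : ℂ) := by
  have hexp : Qm b j * Lm b x = ∑ k, x k • (Qm b j * Qm b k) := by
    show Qm b j * (∑ k, x k • Qm b k) = _
    rw [Finset.mul_sum]
    exact Finset.sum_congr rfl fun k _ => (Matrix.mul_smul _ _ _)
  rw [hexp, Matrix.trace_sum]
  push_cast
  refine Finset.sum_congr rfl fun k _ => ?_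
  rw [Matrix.trace_smul, trace_Qm_mul b hd hnorm j k, Complex.real_smul]
  push_cast
  ring

/-- Orthogonality adjacency. -/
def adjB (b : Fin n → EuclideanSpace ℂ (Fin d)) : Fin n → Fin n → Prop :=
  fun j k => j ≠ k ∧ (inner ℂ (b j) (b k) : ℂ) = 0

lemma adjB_symm (b : Fin n → EuclideanSpace ℂ (Fin d)) : Symmetric (adjB b) := by
  intro j k h
  exact ⟨h.1.symm, inner_eq_zero_symm.1 h.2⟩

lemma adjB_irrefl (b : Fin n → EuclideanSpace ℂ (Fin d)) : ∀ j, ¬ adjB b j j :=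
  fun j h => h.1 rfl

section rowvals

variable (b : Fin n → EuclideanSpace ℂ (Fin d)) (hd : 1 ≤ d)
  (hnorm : ∀ j, ‖b j‖ = 1)
  (hangles : ∀ j k, j ≠ k →
      ‖(inner ℂ (b j) (b k) : ℂ)‖ ^ 2 = 0 ∨ ‖(inner ℂ (b j) (b k) : ℂ)‖ ^ 2 = 1 / d)

include hnorm in
lemma tR_self (j : Fin n) : tR b j j = 1 - 1 / d := by
  unfold tR
  rw [inner_self_eq_norm_sq_to_K, hnorm j]
  norm_num

lemma tR_adj {j k : Fin n} (h : adjB b j k) : tR b j k = - (1 / d) := by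
  unfold tR
  rw [h.2]
  simp

include hangles in
lemma tR_nadj {j k : Fin n} (hne : j ≠ k) (h : ¬ adjB b j k) : tR b j k = 0 := by
  have hinner : (inner ℂ (b j) (b k) : ℂ) ≠ 0 := fun h0 => h ⟨hne, h0⟩
  rcases hangles j k hne with h1 | h1
  · exact absurd (by simpa using (pow_eq_zero_iff (n := 2) (by norm_num)).1 h1) hinner
  · unfold tR
    rw [h1]
    ring

include hd hnorm hangles in
lemma row_eq (x : Fin n → ℝ) (j : Fin n) :
    ∑ k, tR b j k * x k
      = (1 / d) * ((((d : ℝ) - 1) * x j) - ∑ k ∈ MUBcomb.Nf (adjB b) j, x k) := by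
  classical
  have hdR : (d : ℝ) ≠ 0 := Nat.cast_ne_zero.2 (by omega)
  have hsplit : ∑ k, tR b j k * x k
      = tR b j j * x j + ∑ k ∈ univ.erase j, tR b j k * x k := by
    rw [← Finset.sum_erase_add univ _ (Finset.mem_univ j)]
    ring
  have herase : ∑ k ∈ univ.erase j, tR b j k * x k
      = ∑ k ∈ univ.erase j, (if adjB b j k then -(1 / (d : ℝ)) * x k else 0) := by
    refine Finset.sum_congr rfl fun k hk => ?_
    have hne : j ≠ k := fun h => (Finset.mem_erase.1 hk).1 h.symm
    by_cases hadj : adjB b j k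
    · rw [if_pos hadj, tR_adj b hadj]
    · rw [if_neg hadj, tR_nadj b hangles hne hadj]; ring
  have hfilter : (univ.erase j).filter (fun k => adjB b j k) = MUBcomb.Nf (adjB b) j := by
    ext k
    simp only [Finset.mem_filter, Finset.mem_erase, MUBcomb.mem_Nf, Finset.mem_univ, true_and,
      and_true]
    exact ⟨fun h => h.2, fun h => ⟨fun h0 => h.1 h0.symm, h⟩⟩
  rw [hsplit, herase, ← Finset.sum_filter, hfilter, tR_self b hnorm j, ← Finset.mul_sum]
  field_simp
  ring

include hd hnorm hangles in
lemma mem_eigSp_of_Lm_zero {x : Fin n → ℝ} (h : Lm b x = 0) :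
    x ∈ MUBcomb.eigSp d (adjB b) := by
  intro j
  have h1 : Matrix.trace (Qm b j * Lm b x) = 0 := by rw [h, Matrix.mul_zero, Matrix.trace_zero]
  rw [trace_row b hd hnorm x j] at h1
  have h2 : (∑ k, tR b j k * x k) = 0 := by exact_mod_cast h1
  rw [row_eq b hd hnorm hangles x j] at h2
  have hdR : (d : ℝ) ≠ 0 := Nat.cast_ne_zero.2 (by omega)
  have h3 : (1 / (d:ℝ)) ≠ 0 := by positivity
  have := (mul_eq_zero.1 h2).resolve_left h3
  linarith [this]

include hd hnorm hangles in
lemma qt_zero_of_eig {x : Fin n → ℝ} (h : x ∈ MUBcomb.eigSp d (adjB b)) : qt b x = 0 := by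
  unfold qt
  refine Finset.sum_eq_zero fun j _ => ?_
  have : ∑ k, tR b j k * (x j * x k) = x j * ∑ k, tR b j k * x k := by
    rw [Finset.mul_sum]
    exact Finset.sum_congr rfl fun k _ => by ring
  rw [this, row_eq b hd hnorm hangles x j, MUBcomb.mem_eigSp.1 h j]
  simp

include hd hnorm hangles in
lemma habs_holds {x : Fin n → ℝ} (h : x ∈ MUBcomb.eigSp d (adjB b)) :
    (fun k => |x k|) ∈ MUBcomb.eigSp d (adjB b) := by
  have h0 : qt b x = 0 := qt_zero_of_eig b hd hnorm hangles h
  have hcomp : qt b (fun k => |x k|) ≤ qt b x := by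
    unfold qt
    refine Finset.sum_le_sum fun j _ => Finset.sum_le_sum fun k _ => ?_
    rcases eq_or_ne j k with rfl | hne
    · rw [abs_mul_abs_self]
    · have ht : tR b j k ≤ 0 := by
        by_cases hadj : adjB b j k
        · rw [tR_adj b hadj]
          have h01 : (0:ℝ) ≤ 1 / d := by positivity
          linarith
        · rw [tR_nadj b hangles hne hadj]
      have hxx : x j * x k ≤ |x j| * |x k| := by
        calc x j * x k ≤ |x j * x k| := le_abs_self _
          _ = |x j| * |x k| := abs_mul _ _
      exact mul_le_mul_of_nonpos_left hxx ht
  have hge : 0 ≤ qt b (fun k => |x k|) := by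
    rw [qt_eq_qR b hd hnorm]
    exact qR_nonneg b _
  have h1 : qt b (fun k => |x k|) = 0 := le_antisymm (by linarith) hge
  rw [qt_eq_qR b hd hnorm] at h1
  exact mem_eigSp_of_Lm_zero b hd hnorm hangles (Lm_eq_zero_of_qR b h1)

end rowvals


/-- Real-linear coordinates that are injective on Hermitian matrices. -/
noncomputable def psi : Matrix (Fin d) (Fin d) ℂ →ₗ[ℝ] (Fin d → Fin d → ℝ) where
  toFun A i j := if j < i then (A i j).im else (A i j).re
  map_add' A B := by
    funext i j
    by_cases h : j < i <;> simp [h, Matrix.add_apply]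
  map_smul' r A := by
    funext i j
    by_cases h : j < i <;>
      simp [h, Matrix.smul_apply, Complex.smul_re, Complex.smul_im]

lemma psi_inj {A : Matrix (Fin d) (Fin d) ℂ} (hA : ∀ a c, conj (A c a) = A a c)
    (h0 : psi A = 0) : A = 0 := by
  ext a c
  have hv : ∀ i j : Fin d, (if j < i then (A i j).im else (A i j).re) = 0 := by
    intro i j
    have := congrFun (congrFun h0 i) j
    simpa [psi] using this
  simp only [Matrix.zero_apply]
  rcases lt_trichotomy a c with h | h | h
  · have hre : (A a c).re = 0 := by
      have := hv a c
      rwa [if_neg (by omega : ¬ c < a)] at this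
    have him' : (A c a).im = 0 := by
      have := hv c a
      rwa [if_pos h] at this
    have him : (A a c).im = 0 := by
      have := congrArg Complex.im (hA a c)
      simp only [Complex.conj_im] at this
      rw [← this, him', neg_zero]
    exact Complex.ext hre him
  · subst h
    have hre : (A a a).re = 0 := by
      have := hv a a
      rwa [if_neg (by omega : ¬ a < a)] at this
    have him : (A a a).im = 0 := by
      have h1 := hA a a
      rw [Complex.conj_eq_iff_im] at h1
      exact h1
    exact Complex.ext hre him
  · have him : (A a c).im = 0 := by
      have := hv a c
      rwa [if_pos h] at this
    have hre : (A a c).re = 0 := by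
      have h1 := congrArg Complex.re (hA c a)
      simp only [Complex.conj_re] at h1
      have h2 := hv c a
      rw [if_neg (by omega : ¬ a < c)] at h2
      rw [h1]; exact h2
    exact Complex.ext hre him

noncomputable def tau : (Fin d → Fin d → ℝ) →ₗ[ℝ] ℝ where
  toFun y := ∑ i, y i i
  map_add' y z := by simp [Finset.sum_add_distrib]
  map_smul' r y := by simp [Finset.mul_sum]

lemma tau_surj (hd : 1 ≤ d) : Function.Surjective (tau (d := d)) := by
  intro r
  refine ⟨fun i j => if i = j then r / d else 0, ?_⟩
  have hdR : (d : ℝ) ≠ 0 := Nat.cast_ne_zero.2 (by omega)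
  simp only [tau, LinearMap.coe_mk, AddHom.coe_mk, if_pos rfl]
  rw [Finset.sum_const, Finset.card_univ, Fintype.card_fin, nsmul_eq_mul]
  field_simp
  rw [if_pos trivial]
  field_simp

lemma finrank_ker_tau (hd : 1 ≤ d) :
    Module.finrank ℝ (LinearMap.ker (tau (d := d))) = d * d - 1 := by
  have h1 := LinearMap.finrank_range_add_finrank_ker (tau (d := d))
  have h2 : LinearMap.range (tau (d := d)) = ⊤ := LinearMap.range_eq_top.2 (tau_surj hd)
  have h3 : Module.finrank ℝ (Fin d → Fin d → ℝ) = d * d := by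
    rw [Module.finrank_pi_fintype]
    simp [Module.finrank_pi]
  rw [h2, h3] at h1
  rw [finrank_top, Module.finrank_self] at h1
  omega

section dimpart

variable (b : Fin n → EuclideanSpace ℂ (Fin d)) (hd : 1 ≤ d)
  (hnorm : ∀ j, ‖b j‖ = 1)

include hd hnorm in
lemma trace_Lm (x : Fin n → ℝ) : Matrix.trace (Lm b x) = 0 := by
  have hdC : (d : ℂ) ≠ 0 := by
    exact Nat.cast_ne_zero.2 (by omega : d ≠ 0)
  show Matrix.trace (∑ j, x j • Qm b j) = 0
  rw [Matrix.trace_sum]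
  refine Finset.sum_eq_zero fun j _ => ?_
  rw [Matrix.trace_smul]
  have : Matrix.trace (Qm b j) = 0 := by
    unfold Qm
    rw [Matrix.trace_sub, Matrix.trace_smul, Matrix.trace_one, trace_Pm,
      inner_self_eq_norm_sq_to_K, hnorm j]
    push_cast
    field_simp
    rw [Fintype.card_fin, smul_eq_mul, one_div, inv_mul_cancel₀ hdC, sub_self]
  rw [this, smul_zero]

include hd hnorm in
lemma finrank_ker_psiL (hn : n = d * (d + 1)) :
    d + 1 ≤ Module.finrank ℝ (LinearMap.ker ((psi (d := d)).comp (Lm b))) := by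
  have h1 := LinearMap.finrank_range_add_finrank_ker ((psi (d := d)).comp (Lm b))
  have h2 : Module.finrank ℝ (Fin n → ℝ) = n := by
    rw [Module.finrank_pi]
    simp
  have h3 : LinearMap.range ((psi (d := d)).comp (Lm b)) ≤ LinearMap.ker (tau (d := d)) := by
    rintro y hy
    obtain ⟨x, rfl⟩ := LinearMap.mem_range.1 hy
    rw [LinearMap.mem_ker]
    show tau (psi (Lm b x)) = 0
    have : tau (psi (Lm b x)) = ∑ i, ((Lm b x) i i).re := by
      simp only [tau, psi, LinearMap.coe_mk, AddHom.coe_mk]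
      exact Finset.sum_congr rfl fun i _ => by rw [if_neg (lt_irrefl i)]
    rw [this]
    have : ∑ i, ((Lm b x) i i).re = (Matrix.trace (Lm b x)).re := by
      rw [Matrix.trace, Complex.re_sum]
      rfl
    rw [this, trace_Lm b hd hnorm x, Complex.zero_re]
  have h4 : Module.finrank ℝ (LinearMap.range ((psi (d := d)).comp (Lm b))) ≤ d * d - 1 := by
    rw [← finrank_ker_tau hd]
    exact Submodule.finrank_mono h3
  rw [h2] at h1
  have hdd : 1 ≤ d * d := Nat.one_le_iff_ne_zero.2 (by positivity)
  have hn' : n = d * d + d := by rw [hn]; ring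
  omega

include hd hnorm in
lemma ker_psiL_le_eigSp
    (hangles : ∀ j k, j ≠ k →
      ‖(inner ℂ (b j) (b k) : ℂ)‖ ^ 2 = 0 ∨ ‖(inner ℂ (b j) (b k) : ℂ)‖ ^ 2 = 1 / d) :
    LinearMap.ker ((psi (d := d)).comp (Lm b)) ≤ MUBcomb.eigSp d (adjB b) := by
  intro x hx
  rw [LinearMap.mem_ker] at hx
  have hL : Lm b x = 0 := psi_inj (fun a c => Lm_conj b x a c) hx
  exact mem_eigSp_of_Lm_zero b hd hnorm hangles hL

end dimpart

end MUBana


open MUBana MUBcomb in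
/-- Let `d ≥ 1`, `n = d(d+1)`, and let `b 1, …, b n` be unit vectors in `ℂ^d`
such that for every `j ≠ k`, `|⟨b j, b k⟩|²` equals either `0` or `1/d`.  Then the number of
ordered triples of pairwise distinct, pairwise orthogonal vectors equals `(d² − 1)·d·(d − 2)`. -/
theorem card_ordered_orthogonal_triangles
    (d n : ℕ) (hd : 1 ≤ d) (hn : n = d * (d + 1))
    (b : Fin n → EuclideanSpace ℂ (Fin d))
    (hnorm : ∀ j, ‖b j‖ = 1)
    (hangles : ∀ j k, j ≠ k →
      ‖(inner ℂ (b j) (b k) : ℂ)‖ ^ 2 = 0 ∨ ‖(inner ℂ (b j) (b k) : ℂ)‖ ^ 2 = 1 / d) :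
    {t : Fin n × Fin n × Fin n |
        t.1 ≠ t.2.1 ∧ t.2.1 ≠ t.2.2 ∧ t.2.2 ≠ t.1 ∧
        (inner ℂ (b t.1) (b t.2.1) : ℂ) = 0 ∧ (inner ℂ (b t.2.1) (b t.2.2) : ℂ) = 0 ∧
        (inner ℂ (b t.2.2) (b t.1) : ℂ) = 0}.ncard = (d ^ 2 - 1) * d * (d - 2) := by
  classical
  rcases eq_or_lt_of_le hd with hd1 | hd2
  · -- d = 1 : no orthogonal pairs at all
    subst hn
    have hd1' : d = 1 := hd1.symm
    subst hd1'
    have hne : ∀ j k, (inner ℂ (b j) (b k) : ℂ) ≠ 0 := by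
      intro j k h
      rw [inner_apply', Fin.sum_univ_one] at h
      have hnz : ∀ l, b l 0 ≠ 0 := by
        intro l h0
        have : ‖b l‖ = 0 := by
          rw [EuclideanSpace.norm_eq]
          simp [h0]
        rw [hnorm l] at this
        norm_num at this
      rcases mul_eq_zero.1 h with h | h
      · exact hnz j (by simpa using h)
      · exact hnz k h
    have hempty : {t : Fin (1 * (1 + 1)) × Fin (1 * (1 + 1)) × Fin (1 * (1 + 1)) |
        t.1 ≠ t.2.1 ∧ t.2.1 ≠ t.2.2 ∧ t.2.2 ≠ t.1 ∧
        (inner ℂ (b t.1) (b t.2.1) : ℂ) = 0 ∧ (inner ℂ (b t.2.1) (b t.2.2) : ℂ) = 0 ∧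
        (inner ℂ (b t.2.2) (b t.1) : ℂ) = 0} = ∅ := by
      rw [Set.eq_empty_iff_forall_notMem]
      rintro t ⟨-, -, -, h4, -, -⟩
      exact hne _ _ h4
    rw [hempty]
    simp
  · -- d ≥ 2
    have hd2 : 2 ≤ d := hd2
    -- the structure theorem
    have hstruct := MUBcomb.structure_thm (N := n) d hd2 hn (adjB b) (adjB_symm b)
      (adjB_irrefl b)
      (fun x hx => habs_holds b hd hnorm hangles hx)
      (LinearMap.ker ((psi (d := d)).comp (Lm b)))
      (ker_psiL_le_eigSp b hd hnorm hangles)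
      (finrank_ker_psiL b hd hnorm hn)
    have hdeg : ∀ j, (Nf (adjB b) j).card = d - 1 := by
      intro j
      rw [(hstruct j).1, Finset.card_erase_of_mem (self_mem_comp j), (hstruct j).2]
    have htrans : ∀ j k l, adjB b j k → adjB b j l → k ≠ l → adjB b k l := by
      intro j k l hjk hjl hkl
      have hk : k ∈ comp (adjB b) j := Finset.mem_of_mem_erase ((hstruct j).1 ▸ mem_Nf.2 hjk)
      have hl : l ∈ comp (adjB b) j := Finset.mem_of_mem_erase ((hstruct j).1 ▸ mem_Nf.2 hjl)
      have hce : comp (adjB b) j = comp (adjB b) k :=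
        comp_eq_of_reach (adjB_symm b) (mem_comp.1 hk)
      have : l ∈ Nf (adjB b) k := by
        rw [(hstruct k).1, ← hce]
        exact Finset.mem_erase.2 ⟨hkl.symm, hl⟩
      exact mem_Nf.1 this
    -- counting
    set S : Finset (Fin n × Fin n × Fin n) :=
      univ.filter (fun t => adjB b t.1 t.2.1 ∧ adjB b t.2.1 t.2.2 ∧ adjB b t.1 t.2.2) with hSdef
    have hset : {t : Fin n × Fin n × Fin n |
        t.1 ≠ t.2.1 ∧ t.2.1 ≠ t.2.2 ∧ t.2.2 ≠ t.1 ∧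
        (inner ℂ (b t.1) (b t.2.1) : ℂ) = 0 ∧ (inner ℂ (b t.2.1) (b t.2.2) : ℂ) = 0 ∧
        (inner ℂ (b t.2.2) (b t.1) : ℂ) = 0} = (S : Set (Fin n × Fin n × Fin n)) := by
      ext t
      rw [Set.mem_setOf_eq, Finset.mem_coe, hSdef, Finset.mem_filter]
      simp only [Set.mem_setOf_eq, hSdef, Finset.coe_filter, Finset.mem_univ, true_and,
        Set.mem_setOf_eq, adjB]
      constructor
      · rintro ⟨h1, h2, h3, h4, h5, h6⟩
        exact ⟨⟨h1, h4⟩, ⟨h2, h5⟩, ⟨fun h => h3 h.symm, inner_eq_zero_symm.1 h6⟩⟩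
      · rintro ⟨⟨h1, h4⟩, ⟨h2, h5⟩, ⟨h3, h6⟩⟩
        exact ⟨h1, h2, fun h => h3 h.symm, h4, h5, inner_eq_zero_symm.1 h6⟩
    rw [hset, Set.ncard_coe_finset]
    -- inner pair counting
    set T2 : Fin n → Finset (Fin n × Fin n) :=
      fun j => univ.filter (fun p => adjB b j p.1 ∧ adjB b p.1 p.2 ∧ adjB b j p.2) with hT2def
    have hT2 : ∀ j, T2 j = (Nf (adjB b) j).biUnion
        (fun k => {k} ×ˢ ((Nf (adjB b) j).erase k)) := by
      intro j
      ext p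
      simp only [hT2def, Finset.mem_filter, Finset.mem_univ, true_and, Finset.mem_biUnion,
        Finset.mem_product, Finset.mem_singleton, Finset.mem_erase, mem_Nf]
      constructor
      · rintro ⟨h1, h2, h3⟩
        exact ⟨p.1, h1, rfl, h2.1.symm, h3⟩
      · rintro ⟨k, hk, hpk, hne, hp2⟩
        subst hpk
        exact ⟨hk, htrans j p.1 p.2 hk hp2 (fun h => hne h.symm), hp2⟩
    have hT2card : ∀ j, (T2 j).card = (d - 1) * (d - 2) := by
      intro j
      rw [hT2 j, Finset.card_biUnion]
      · have : ∀ k ∈ Nf (adjB b) j, ({k} ×ˢ ((Nf (adjB b) j).erase k)).card = d - 2 := by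
          intro k hk
          rw [Finset.card_product, Finset.card_singleton, one_mul,
            Finset.card_erase_of_mem hk, hdeg j]
          omega
        rw [Finset.sum_congr rfl this, Finset.sum_const, hdeg j, smul_eq_mul]
      · intro x hx y hy hxy
        rw [Function.onFun, Finset.disjoint_left]
        rintro p hp hp'
        rw [Finset.mem_product, Finset.mem_singleton] at hp hp'
        exact hxy (hp.1.symm.trans hp'.1)
    have hSbi : S = (univ : Finset (Fin n)).biUnion (fun j => {j} ×ˢ T2 j) := by
      ext t
      simp only [hSdef, hT2def, Finset.mem_filter, Finset.mem_univ, true_and,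
        Finset.mem_biUnion, Finset.mem_product, Finset.mem_singleton]
      constructor
      · rintro ⟨h1, h2, h3⟩
        exact ⟨t.1, rfl, h1, h2, h3⟩
      · rintro ⟨j, hj, h1, h2, h3⟩
        subst hj
        exact ⟨h1, h2, h3⟩
    have hScard : S.card = n * ((d - 1) * (d - 2)) := by
      rw [hSbi, Finset.card_biUnion]
      · rw [Finset.sum_congr rfl (fun j _ => by
          rw [Finset.card_product, Finset.card_singleton, one_mul, hT2card j])]
        rw [Finset.sum_const, smul_eq_mul, Finset.card_univ, Fintype.card_fin]
      · intro x hx y hy hxy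
        rw [Function.onFun, Finset.disjoint_left]
        rintro p hp hp'
        rw [Finset.mem_product, Finset.mem_singleton] at hp hp'
        exact hxy (hp.1.symm.trans hp'.1)
    rw [hScard, hn]
    obtain ⟨e, rfl⟩ : ∃ e, d = e + 2 := ⟨d - 2, by omega⟩
    have h1 : (e + 2) ^ 2 - 1 = e * e + 4 * e + 3 := by
      have : (e + 2) ^ 2 = e * e + 4 * e + 4 := by ring
      omega
    have h2 : e + 2 - 1 = e + 1 := by omega
    have h3 : e + 2 - 2 = e := by omega
    rw [h1, h2, h3]
    ring
end
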